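/- arXiv:1602.04497 — 8 statements merged into one kernel-verified Lean document; each statement's English description precedes it below -/
import Mathlib

section
/- Let V and W be Banach spaces, a a bounded sesquilinear form on V × W with norm ‖a‖, satisfying the inf-sup condition α := inf_{v∈V} sup_{w∈W} |a(v,w)|/(‖v‖_V ‖w‖_W) > 0. Let V_h ⊂ V and W_h ⊂ W be finite-dimensional subspaces. If there exists a map Π_h : W → W_h and γ_Π > 0 such that a(v_h, Π_h w − w) = 0 for all v_h ∈ V_h, w ∈ W, and γ_Π ‖Π_h w‖_W ≤ ‖w‖_W for all w ∈ W, then the discrete inf-sup condition holds: inf_{v_h∈V_h} sup_{w_h∈W_h} |a(v_h,w_h)|/(‖v_h‖_V ‖w_h‖_W) ≥ γ_Π α > 0. -/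
open scoped ComplexConjugate

/-- Fortin's Lemma: existence of a stable Fortin operator implies the
discrete inf-sup condition with constant `γ * α`. -/
theorem fortin_lemma
    {V W : Type*} [NormedAddCommGroup V] [NormedSpace ℂ V] [CompleteSpace V]
    [NormedAddCommGroup W] [NormedSpace ℂ W] [CompleteSpace W]
    (a : V → W → ℂ)
    -- `a` is sesquilinear: linear in the first argument
    (ha_addv : ∀ v v' w, a (v + v') w = a v w + a v' w)
    (ha_smulv : ∀ (c : ℂ) v w, a (c • v) w = c * a v w)
    -- antilinear in the second argument
    (ha_addw : ∀ v w w', a v (w + w') = a v w + a v w')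
    (ha_smulw : ∀ v (c : ℂ) w, a v (c • w) = conj c * a v w)
    -- `a` is bounded with norm `na`
    (na : ℝ) (hna : ∀ v w, ‖a v w‖ ≤ na * ‖v‖ * ‖w‖)
    -- the (continuous) inf-sup condition with constant `α > 0`
    (α : ℝ) (hα0 : 0 < α)
    (hα : ∀ v : V, α * ‖v‖ ≤ ⨆ w : {w : W // w ≠ 0}, ‖a v (w : W)‖ / ‖(w : W)‖)
    -- finite-dimensional subspaces
    (Vh : Submodule ℂ V) (Wh : Submodule ℂ W)
    [FiniteDimensional ℂ Vh] [FiniteDimensional ℂ Wh]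
    -- the Fortin operator `Π` with stability constant `γ > 0`
    (P : W → W) (hPmem : ∀ w, P w ∈ Wh)
    (hPa : ∀ w, ∀ v ∈ Vh, a v (P w - w) = 0)
    (γ : ℝ) (hγ0 : 0 < γ) (hPst : ∀ w : W, γ * ‖P w‖ ≤ ‖w‖) :
    0 < γ * α ∧
      ∀ v ∈ Vh, γ * α * ‖v‖ ≤ ⨆ wh : Wh, ‖a v (wh : W)‖ / ‖(wh : W)‖ := by
  refine ⟨mul_pos hγ0 hα0, fun v hv => ?_⟩
  set S : Wh → ℝ := fun wh => ‖a v (wh : W)‖ / ‖(wh : W)‖ with hS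
  have h0 : a v 0 = 0 := by
    have h := ha_addw v 0 0
    simp only [add_zero] at h
    exact (left_eq_add.mp h)
  have hbdd : BddAbove (Set.range S) := by
    refine ⟨max 0 (na * ‖v‖), ?_⟩
    rintro x ⟨wh, rfl⟩
    by_cases hw : (wh : W) = 0
    · simp [hS, hw]
    · have hwpos : 0 < ‖(wh : W)‖ := norm_pos_iff.mpr hw
      have : ‖a v (wh : W)‖ / ‖(wh : W)‖ ≤ na * ‖v‖ := by
        rw [div_le_iff₀ hwpos]
        exact hna v wh
      exact le_trans this (le_max_right _ _)
  have hsup0 : 0 ≤ ⨆ wh : Wh, S wh := by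
    have := le_ciSup hbdd (0 : Wh)
    simpa [hS] using this
  have key : α * ‖v‖ ≤ γ⁻¹ * ⨆ wh : Wh, S wh := by
    refine le_trans (hα v) (Real.iSup_le (fun w => ?_) (by positivity))
    obtain ⟨w, hw⟩ := w
    have haw : a v w = a v (P w) := by
      have h1 := hPa w v hv
      have h2 := ha_addw v (P w - w) w
      simp only [sub_add_cancel] at h2
      rw [h2, h1, zero_add]
    by_cases hPw : P w = 0
    · simp only [haw, hPw, h0, norm_zero, zero_div]
      positivity
    · have hPwpos : 0 < ‖P w‖ := norm_pos_iff.mpr hPw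
      have hγP : γ * ‖P w‖ ≤ ‖w‖ := hPst w
      have h3 : ‖a v w‖ / ‖w‖ ≤ ‖a v (P w)‖ / (γ * ‖P w‖) := by
        rw [haw]
        exact div_le_div_of_nonneg_left (norm_nonneg _) (by positivity) hγP
      have h4 : ‖a v (P w)‖ / (γ * ‖P w‖) = γ⁻¹ * (‖a v (P w)‖ / ‖P w‖) := by
        field_simp
      have h5 : ‖a v (P w)‖ / ‖P w‖ ≤ ⨆ wh : Wh, S wh := by
        have := le_ciSup hbdd (⟨P w, hPmem w⟩ : Wh)
        simpa [hS] using this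
      calc ‖a v w‖ / ‖w‖ ≤ γ⁻¹ * (‖a v (P w)‖ / ‖P w‖) := by rw [← h4]; exact h3
        _ ≤ γ⁻¹ * ⨆ wh : Wh, S wh := by
            exact mul_le_mul_of_nonneg_left h5 (by positivity)
  have := mul_le_mul_of_nonneg_left key (le_of_lt hγ0)
  calc γ * α * ‖v‖ = γ * (α * ‖v‖) := by ring
    _ ≤ γ * (γ⁻¹ * ⨆ wh : Wh, S wh) := this
    _ = ⨆ wh : Wh, S wh := by field_simp
end

section
/- Let V and W be Banach spaces, a a bounded sesquilinear form on V × W with ‖a‖ < ∞, and let V_h ⊂ V, W_h ⊂ W be finite-dimensional subspaces. If the discrete inf-sup condition holds with constant α̂ := inf_{v_h∈V_h} sup_{w_h∈W_h} |a(v_h,w_h)|/(‖v_h‖_V ‖w_h‖_W) > 0, then there exists a (possibly nonlinear) map Π_h : W → W_h such that a(v_h, Π_h(w) − w) = 0 for all v_h ∈ V_h and w ∈ W, and (α̂/‖a‖) ‖Π_h(w)‖_W ≤ ‖w‖_W for all w ∈ W. -/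
set_option maxHeartbeats 1000000


open scoped ComplexConjugate

/-- Converse of Fortin's Lemma: the discrete inf-sup condition implies the
existence of a (possibly nonlinear) Fortin operator with stability constant
`α̂ / ‖a‖`. -/
theorem converse_fortin
    {V W : Type*} [NormedAddCommGroup V] [NormedSpace ℂ V] [CompleteSpace V]
    [NormedAddCommGroup W] [NormedSpace ℂ W] [CompleteSpace W]
    (a : V → W → ℂ)
    (ha_addv : ∀ v v' w, a (v + v') w = a v w + a v' w)
    (ha_smulv : ∀ (c : ℂ) v w, a (c • v) w = c * a v w)
    (ha_addw : ∀ v w w', a v (w + w') = a v w + a v w')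
    (ha_smulw : ∀ v (c : ℂ) w, a v (c • w) = conj c * a v w)
    (na : ℝ) (hna0 : 0 < na) (hna : ∀ v w, ‖a v w‖ ≤ na * ‖v‖ * ‖w‖)
    (Vh : Submodule ℂ V) (Wh : Submodule ℂ W)
    [FiniteDimensional ℂ Vh] [FiniteDimensional ℂ Wh]
    -- the discrete inf-sup condition with constant `α̂ > 0`
    (αh : ℝ) (hαh0 : 0 < αh)
    (hαh : ∀ v ∈ Vh, αh * ‖v‖ ≤ ⨆ wh : Wh, ‖a v (wh : W)‖ / ‖(wh : W)‖) :
    ∃ P : W → W, (∀ w, P w ∈ Wh) ∧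
      (∀ w, ∀ v ∈ Vh, a v (P w - w) = 0) ∧
      ∀ w : W, (αh / na) * ‖P w‖ ≤ ‖w‖ := by
  classical
  have hsub : ∀ v (w w' : W), a v (w - w') = a v w - a v w' := by
    intro v w w'
    rw [sub_eq_add_neg, ← neg_one_smul ℂ w', ha_addw, ha_smulw]
    simp [sub_eq_add_neg]
  have hzerow : ∀ v, a v 0 = 0 := by
    intro v; have := hsub v 0 0; simpa using this
  have hsmw : ∀ (v : V) (r : ℝ) (w : W), a v (r • w) = r * a v w := by
    intro v r w
    rw [← algebraMap_smul ℂ r w, ha_smulw]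
    simp [Complex.conj_ofReal]
  have hsmv : ∀ (r : ℝ) (v : V) (w : W), a (r • v) w = r * a v w := by
    intro r v w
    rw [← algebraMap_smul ℂ r v, ha_smulv]
    simp
  -- bound on sups
  have hsuple : ∀ (v : V) (M : ℝ), 0 ≤ M → (∀ x : Wh, ‖a v (x : W)‖ ≤ M * ‖(x : W)‖) →
      (⨆ x : Wh, ‖a v (x : W)‖ / ‖(x : W)‖) ≤ M := by
    intro v M hM h
    refine ciSup_le fun x => ?_
    rcases eq_or_ne ‖(x : W)‖ 0 with h0 | h0
    · simp [h0, hM]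
    · rw [div_le_iff₀ (lt_of_le_of_ne (norm_nonneg _) (Ne.symm h0))]
      exact h x
  -- the three main objects
  let B : Wh →ₗ[ℝ] Module.Dual ℂ Vh :=
    { toFun := fun x =>
        { toFun := fun v => a v x
          map_add' := fun v v' => by push_cast [ha_addv]; ring
          map_smul' := fun c v => by push_cast [ha_smulv]; simp }
      map_add' := fun x y => by ext v; simp [ha_addw]
      map_smul' := fun r x => by
        ext v
        have h1 : ((r • x : Wh) : W) = r • (x : W) := by simp
        simp [h1, hsmw] }
  let S : Vh →ₗ[ℝ] Module.Dual ℂ Wh :=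
    { toFun := fun v =>
        { toFun := fun x => conj (a v x)
          map_add' := fun x x' => by push_cast [ha_addw]; simp
          map_smul' := fun c x => by push_cast [ha_smulw]; simp [smul_eq_mul] }
      map_add' := fun v v' => by ext x; push_cast [ha_addv]; simp
      map_smul' := fun r v => by
        ext x
        have h1 : ((r • v : Vh) : V) = r • (v : V) := by simp
        simp [h1, hsmv] }
  let K : Submodule ℂ Wh :=
    { carrier := { x | ∀ v : Vh, a v x = 0 }
      add_mem' := fun {x y} hx hy v => by push_cast [ha_addw, hx v, hy v]; ring
      zero_mem' := fun v => by push_cast [hzerow]; rfl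
      smul_mem' := fun c x hx v => by
        have h1 : ((c • x : Wh) : W) = c • (x : W) := by simp
        rw [h1, ha_smulw, hx v, mul_zero] }
  have hKmem : ∀ x : Wh, x ∈ K ↔ ∀ v : Vh, a v x = 0 := fun x => Iff.rfl
  haveI : FiniteDimensional ℝ Vh := Module.Finite.trans (R := ℝ) ℂ Vh
  haveI : FiniteDimensional ℝ Wh := Module.Finite.trans (R := ℝ) ℂ Wh
  -- injectivity of S
  have hSinj : Function.Injective S := by
    rw [← LinearMap.ker_eq_bot]
    refine (Submodule.eq_bot_iff _).2 fun v hv => ?_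
    have hv0 : ∀ x : Wh, a v (x : W) = 0 := by
      intro x
      have h := LinearMap.congr_fun (LinearMap.mem_ker.1 hv) x
      have h2 : conj (a v (x : W)) = 0 := h
      have := congrArg conj h2
      simpa using this
    have h1 : αh * ‖(v : V)‖ ≤ 0 := by
      refine (hαh v v.2).trans (hsuple _ 0 le_rfl fun x => ?_)
      simp [hv0 x]
    have h2 : ‖(v : V)‖ = 0 := by nlinarith [norm_nonneg (v : V)]
    exact Subtype.ext (norm_eq_zero.mp h2)
  -- dimension bookkeeping
  haveI : FiniteDimensional ℂ (Module.Dual ℂ Vh) := inferInstance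
  haveI : FiniteDimensional ℝ (Module.Dual ℂ Vh) := Module.Finite.trans (R := ℝ) ℂ _
  haveI : FiniteDimensional ℂ (Module.Dual ℂ Wh) := inferInstance
  haveI : FiniteDimensional ℝ (Module.Dual ℂ Wh) := Module.Finite.trans (R := ℝ) ℂ _
  have hVr : Module.finrank ℝ Vh = 2 * Module.finrank ℂ Vh := by
    rw [← Module.finrank_mul_finrank ℝ ℂ Vh, Complex.finrank_real_complex]
  have hWr : Module.finrank ℝ Wh = 2 * Module.finrank ℂ Wh := by
    rw [← Module.finrank_mul_finrank ℝ ℂ Wh, Complex.finrank_real_complex]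
  have hKr : Module.finrank ℝ K = 2 * Module.finrank ℂ K := by
    rw [← Module.finrank_mul_finrank ℝ ℂ K, Complex.finrank_real_complex]
  have e4 : Module.finrank ℂ K.dualAnnihilator + Module.finrank ℂ K = Module.finrank ℂ Wh := by
    have h1 : Module.finrank ℂ K.dualAnnihilator = Module.finrank ℂ (Wh ⧸ K) := by
      rw [← (Submodule.dualQuotEquivDualAnnihilator K).finrank_eq, Subspace.dual_finrank_eq]
    rw [h1, Submodule.finrank_quotient_add_finrank]
  have e3 : Module.finrank ℝ (K.dualAnnihilator.restrictScalars ℝ)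
      = 2 * Module.finrank ℂ K.dualAnnihilator := by
    rw [((Submodule.restrictScalarsEquiv ℝ ℂ _ K.dualAnnihilator).restrictScalars ℝ).finrank_eq,
      ← Module.finrank_mul_finrank ℝ ℂ K.dualAnnihilator, Complex.finrank_real_complex]
  have e1 : Module.finrank ℝ (LinearMap.range S) = Module.finrank ℝ Vh :=
    LinearMap.finrank_range_of_inj hSinj
  have e2 : LinearMap.range S ≤ K.dualAnnihilator.restrictScalars ℝ := by
    rintro f ⟨v, rfl⟩
    rw [Submodule.restrictScalars_mem, Submodule.mem_dualAnnihilator]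
    intro x hx
    have : a v (x : W) = 0 := hx v
    show conj (a v (x : W)) = 0
    rw [this, map_zero]
  have e5 : Module.finrank ℝ (LinearMap.range B) + Module.finrank ℝ K = Module.finrank ℝ Wh := by
    have hker : LinearMap.ker B = K.restrictScalars ℝ := by
      ext x
      simp only [LinearMap.mem_ker, Submodule.restrictScalars_mem, hKmem]
      constructor
      · intro h v; exact LinearMap.congr_fun h v
      · intro h; ext v; exact h v
    have := LinearMap.finrank_range_add_finrank_ker B
    rwa [hker, ((Submodule.restrictScalarsEquiv ℝ ℂ _ K).restrictScalars ℝ).finrank_eq] at this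
  have e6 : Module.finrank ℝ (LinearMap.range B) ≤ Module.finrank ℝ Vh := by
    calc Module.finrank ℝ (LinearMap.range B) ≤ Module.finrank ℝ (Module.Dual ℂ Vh) :=
          Submodule.finrank_le _
      _ = Module.finrank ℝ Vh := by
          rw [← Module.finrank_mul_finrank ℝ ℂ (Module.Dual ℂ Vh), Subspace.dual_finrank_eq,
            Module.finrank_mul_finrank]
  have e7 : Module.finrank ℝ (LinearMap.range S)
      ≤ Module.finrank ℝ (K.dualAnnihilator.restrictScalars ℝ) := Submodule.finrank_mono e2
  -- conclusions
  have hSrange : LinearMap.range S = K.dualAnnihilator.restrictScalars ℝ :=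
    Submodule.eq_of_le_of_finrank_le e2 (by omega)
  have hBsurj : ∀ ℓ : Module.Dual ℂ Vh, ∃ x : Wh, B x = ℓ := by
    have : LinearMap.range B = ⊤ := Submodule.eq_top_of_finrank_eq (by
      rw [← Module.finrank_mul_finrank ℝ ℂ (Module.Dual ℂ Vh), Subspace.dual_finrank_eq,
        Module.finrank_mul_finrank]
      omega)
    intro ℓ
    exact (LinearMap.range_eq_top.mp this) ℓ |>.imp fun x hx => hx
  -- key existence statement
  have key : ∀ w : W, ∃ x : Wh, (∀ v : Vh, a v (x : W) = a v w) ∧ αh * ‖(x : W)‖ ≤ na * ‖w‖ := by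
    intro w
    obtain ⟨x₀, hx₀⟩ := hBsurj
      { toFun := fun v : Vh => a v w
        map_add' := fun v v' => by push_cast [ha_addv]; ring
        map_smul' := fun c v => by push_cast [ha_smulv]; simp }
    have hx₀X : ∀ v : Vh, a v (x₀ : W) = a v w := fun v => LinearMap.congr_fun hx₀ v
    set X : Set Wh := {x | ∀ v : Vh, a v (x : W) = a v w} with hX
    have hXclosed : IsClosed X := by
      have hXi : X = ⋂ v : Vh, (fun x : Wh => a v (x : W)) ⁻¹' {a (v : V) w} := by
        ext x; simp [hX, Set.mem_iInter]
      rw [hXi]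
      refine isClosed_iInter fun v => IsClosed.preimage ?_ isClosed_singleton
      exact LinearMap.continuous_of_finiteDimensional
        ({ toFun := fun x : Wh => a v (x : W)
           map_add' := fun x y => by push_cast [ha_addw]; ring
           map_smul' := fun r x => by
             have h1 : ((r • x : Wh) : W) = r • (x : W) := by simp
             simp [h1, hsmw] } : Wh →ₗ[ℝ] ℂ)
    haveI : ProperSpace Wh := FiniteDimensional.proper ℂ Wh
    have hx₀mem : x₀ ∈ X ∩ Metric.closedBall 0 ‖x₀‖ := ⟨hx₀X, by simp⟩
    obtain ⟨m, hmT, hmmin⟩ :=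
      ((isCompact_closedBall (0 : Wh) ‖x₀‖).inter_left hXclosed).exists_isMinOn
        ⟨x₀, hx₀mem⟩ continuous_norm.continuousOn
    have hmX : m ∈ X := hmT.1
    have hmin : ∀ y ∈ X, ‖m‖ ≤ ‖y‖ := by
      intro y hy
      by_cases hyb : ‖y‖ ≤ ‖x₀‖
      · exact hmmin ⟨hy, by simpa [Metric.mem_closedBall, dist_zero_right] using hyb⟩
      · exact le_trans (hmmin hx₀mem) (le_of_not_ge hyb)
    rcases eq_or_ne m 0 with hm0 | hm0
    · refine ⟨m, hmX, ?_⟩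
      have : ‖(m : W)‖ = 0 := by rw [hm0]; simp
      rw [this, mul_zero]
      positivity
    haveI : IsClosed (K : Set Wh) := Submodule.closed_of_finiteDimensional K
    have hqn : ‖(Submodule.Quotient.mk m : Wh ⧸ K)‖ = ‖m‖ := by
      refine le_antisymm (Submodule.Quotient.norm_mk_le K m) ?_
      refine le_of_forall_pos_le_add fun ε hε => ?_
      obtain ⟨y, hy, hylt⟩ :=
        Submodule.Quotient.norm_mk_lt (Submodule.Quotient.mk m : Wh ⧸ K) hε
      have hyX : y ∈ X := by
        intro v
        have hmem : y - m ∈ K := by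
          rw [← Submodule.Quotient.eq K] at *
          exact hy
        have h1 : a v ((y : Wh) : W) - a v ((m : Wh) : W) = 0 := by
          rw [← hsub]
          have h2 := (hKmem _).1 hmem v
          rwa [Submodule.coe_sub] at h2
        have := hmX v
        rw [sub_eq_zero] at h1
        rw [h1, this]
      calc ‖m‖ ≤ ‖y‖ := hmin y hyX
        _ ≤ ‖(Submodule.Quotient.mk m : Wh ⧸ K)‖ + ε := hylt.le
    have hmkne : (Submodule.Quotient.mk m : Wh ⧸ K) ≠ 0 := by
      rw [← norm_ne_zero_iff, hqn]
      simpa using hm0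
    obtain ⟨g, hg1, hg2⟩ := exists_dual_vector ℂ (Submodule.Quotient.mk m : Wh ⧸ K) (norm_ne_zero_iff.mpr hmkne)
    have hF0 : (g.toLinearMap.comp K.mkQ : Module.Dual ℂ Wh) ∈ LinearMap.range S := by
      rw [hSrange, Submodule.restrictScalars_mem, Submodule.mem_dualAnnihilator]
      intro x hxK
      have h0 : (Submodule.Quotient.mk x : Wh ⧸ K) = 0 := (Submodule.Quotient.mk_eq_zero K).2 hxK
      show g (Submodule.Quotient.mk x) = 0
      rw [h0, map_zero]
    obtain ⟨v₀, hv₀⟩ := hF0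
    have hfx : ∀ x : Wh, conj (a (v₀ : V) (x : W)) = g (Submodule.Quotient.mk x) :=
      fun x => LinearMap.congr_fun hv₀ x
    have hb1 : ∀ x : Wh, ‖a (v₀ : V) (x : W)‖ ≤ ‖(x : W)‖ := by
      intro x
      have h1 : ‖a (v₀ : V) (x : W)‖ = ‖g (Submodule.Quotient.mk x)‖ := by
        rw [← hfx x, RCLike.norm_conj]
      rw [h1]
      calc ‖g (Submodule.Quotient.mk x)‖
          ≤ ‖g‖ * ‖(Submodule.Quotient.mk x : Wh ⧸ K)‖ := g.le_opNorm _
        _ = ‖(Submodule.Quotient.mk x : Wh ⧸ K)‖ := by rw [hg1, one_mul]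
        _ ≤ ‖x‖ := Submodule.Quotient.norm_mk_le K x
    have hv₀1 : αh * ‖(v₀ : V)‖ ≤ 1 :=
      (hαh v₀ v₀.2).trans (hsuple _ 1 zero_le_one (fun x => by simpa using hb1 x))
    have hmw : ‖(m : W)‖ = ‖a (v₀ : V) w‖ := by
      have h1 : conj (a (v₀ : V) w) = ((‖(Submodule.Quotient.mk m : Wh ⧸ K)‖ : ℝ) : ℂ) := by
        rw [← hmX v₀, hfx m, hg2]; rfl
      have h3 := congrArg norm h1
      rw [RCLike.norm_conj] at h3
      rw [h3, hqn]
      simp [Submodule.coe_norm]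
    refine ⟨m, hmX, ?_⟩
    have h2 : ‖a (v₀ : V) w‖ ≤ na * ‖(v₀ : V)‖ * ‖w‖ := hna _ w
    nlinarith [norm_nonneg w, norm_nonneg (v₀ : V), norm_nonneg (m : W),
      mul_nonneg hna0.le (norm_nonneg w), hαh0.le]
  choose xh hxh1 hxh2 using key
  refine ⟨fun w => (xh w : W), fun w => (xh w).2, ?_, ?_⟩
  · intro w v hv
    rw [hsub, hxh1 w ⟨v, hv⟩, sub_self]
  · intro w
    rw [div_mul_eq_mul_div, div_le_iff₀ hna0]
    calc αh * ‖(xh w : W)‖ ≤ na * ‖w‖ := hxh2 w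
      _ = ‖w‖ * na := mul_comm _ _
end

section
/- Under the hypotheses of the converse Fortin Lemma (discrete inf-sup condition α̂ > 0 on finite-dimensional subspaces V_h ⊂ V, W_h ⊂ W for a bounded sesquilinear form a), the Fortin map Π_h : W → W_h can be constructed to be idempotent: Π_h(Π_h(w)) = Π_h(w) for all w ∈ W, in addition to satisfying a(v_h, Π_h(w) − w) = 0 for all v_h ∈ V_h and (α̂/‖a‖)‖Π_h(w)‖_W ≤ ‖w‖_W. -/
open scoped ComplexConjugate

lemma fortin_key
    {V W : Type*} [NormedAddCommGroup V] [NormedSpace ℂ V]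
    [NormedAddCommGroup W] [NormedSpace ℂ W]
    (a : V → W → ℂ)
    (ha_addv : ∀ v v' w, a (v + v') w = a v w + a v' w)
    (ha_smulv : ∀ (c : ℂ) v w, a (c • v) w = c * a v w)
    (ha_addw : ∀ v w w', a v (w + w') = a v w + a v w')
    (ha_smulw : ∀ v (c : ℂ) w, a v (c • w) = conj c * a v w)
    (na : ℝ) (hna0 : 0 < na) (hna : ∀ v w, ‖a v w‖ ≤ na * ‖v‖ * ‖w‖)
    (Vh : Submodule ℂ V) (Wh : Submodule ℂ W)
    [FiniteDimensional ℂ Vh] [FiniteDimensional ℂ Wh]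
    (αh : ℝ) (hαh0 : 0 < αh)
    (hαh : ∀ v ∈ Vh, αh * ‖v‖ ≤ ⨆ wh : Wh, ‖a v (wh : W)‖ / ‖(wh : W)‖)
    (w : W) :
    ∃ p, p ∈ Wh ∧ (∀ v ∈ Vh, a v p = a v w) ∧ αh * ‖p‖ ≤ na * ‖w‖ := by
  -- basic algebraic facts about `a`
  have ha0w : ∀ v, a v (0 : W) = 0 := by
    intro v
    have h := ha_smulw v 0 0
    simpa using h
  have ha0v : ∀ x, a (0 : V) x = 0 := by
    intro x
    have h := ha_smulv 0 0 x
    simpa using h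
  have ha_subw : ∀ v p q, a v (p - q) = a v p - a v q := by
    intro v p q
    have h := ha_addw v (p - q) q
    rw [sub_add_cancel] at h
    rw [h]; ring
  have ha_rsmulw : ∀ v (c : ℝ) (p : W), a v (c • p) = (c : ℂ) * a v p := by
    intro v c p
    have : (c : ℝ) • p = (c : ℂ) • p := (algebraMap_smul ℂ c p).symm
    rw [this, ha_smulw]
    simp [Complex.conj_ofReal]
  rcases eq_or_ne w 0 with rfl | hw0
  · exact ⟨0, Wh.zero_mem, fun v _ => rfl, by simp⟩
  set m := Module.finrank ℂ Vh with hm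
  let b : Module.Basis (Fin m) ℂ Vh := Module.finBasis ℂ Vh
  set R : ℝ := na * ‖w‖ / αh with hR
  have hR0 : 0 < R := div_pos (mul_pos hna0 (norm_pos_iff.mpr hw0)) hαh0
  have hαR : αh * R = na * ‖w‖ := by
    rw [hR]; field_simp [hαh0.ne']
  -- the real-linear constraint map on `Wh`
  let Ψ : Wh →ₗ[ℝ] (Fin m → ℂ) :=
    { toFun := fun q i => conj (a ((b i : Vh) : V) (q : W))
      map_add' := by
        intro q q'
        funext i
        simp [ha_addw]
      map_smul' := by
        intro c q
        funext i
        have hc : ((c • q : Wh) : W) = (c : ℝ) • (q : W) := rfl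
        simp [hc, ha_rsmulw, Complex.real_smul] }
  have hΨcont : Continuous Ψ := Ψ.continuous_of_finiteDimensional
  have hWhproper : ProperSpace Wh := FiniteDimensional.proper ℂ Wh
  set S : Set (Fin m → ℂ) := Ψ '' Metric.closedBall 0 R with hS
  have hScompact : IsCompact S := (isCompact_closedBall (0 : Wh) R).image hΨcont
  have hSconvex : Convex ℝ S := (convex_closedBall (0 : Wh) R).linear_image Ψ
  set t : Fin m → ℂ := fun i => conj (a ((b i : Vh) : V) w) with ht
  by_cases htS : t ∈ S
  · rcases htS with ⟨q, hq, hΨq⟩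
    refine ⟨(q : W), q.2, ?_, ?_⟩
    · -- constraints hold on the basis, hence everywhere
      have hbase : ∀ i, a ((b i : Vh) : V) (q : W) = a ((b i : Vh) : V) w := by
        intro i
        have h := congrArg conj (congrFun hΨq i)
        simpa [Ψ, t] using h
      intro v hv
      let L : Vh →ₗ[ℂ] ℂ :=
        { toFun := fun v => a (v : V) (q : W) - a (v : V) w
          map_add' := by intro x y; simp [ha_addv]; ring
          map_smul' := by intro c x; simp [ha_smulv]; ring }
      have hL : L = 0 := by
        apply b.ext
        intro i
        simp only [L, LinearMap.coe_mk, AddHom.coe_mk, LinearMap.zero_apply]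
        rw [hbase i]; ring
      have := congrFun (congrArg (fun f => f.toFun) hL) ⟨v, hv⟩
      simpa [L, sub_eq_zero] using this
    · have hq' : ‖q‖ ≤ R := by simpa using hq
      calc αh * ‖(q : W)‖ ≤ αh * R := by
            have : ‖(q : W)‖ = ‖q‖ := rfl
            rw [this]; exact mul_le_mul_of_nonneg_left hq' hαh0.le
        _ = na * ‖w‖ := hαR
  · exfalso
    obtain ⟨f, u, hfS, hft⟩ :=
      geometric_hahn_banach_closed_point hSconvex hScompact.isClosed htS
    -- extend `f` to a complex-linear functional
    let F : (Fin m → ℂ) →ₗ[ℂ] ℂ := LinearMap.extendTo𝕜' (f : (Fin m → ℂ) →ₗ[ℝ] ℝ)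
    have hF_re : ∀ x, (F x).re = f x := by
      intro x
      exact LinearMap.extendTo𝕜'_apply_re (𝕜 := ℂ) (f : (Fin m → ℂ) →ₗ[ℝ] ℝ) x
    set c : Fin m → ℂ := fun i => F (Pi.single i 1) with hc
    set v₀ : Vh := ∑ i, conj (c i) • b i with hv₀
    -- representation of `F` composed with the constraint map
    have hrep : ∀ p : W, F (fun i => conj (a ((b i : Vh) : V) p)) = conj (a ((v₀ : Vh) : V) p) := by
      intro p
      have h1 : a ((v₀ : Vh) : V) p = ∑ i, conj (c i) * a ((b i : Vh) : V) p := by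
        rw [hv₀]
        rw [Submodule.coe_sum]
        have : ∀ s : Finset (Fin m),
            a (∑ i ∈ s, ((conj (c i) • b i : Vh) : V)) p
              = ∑ i ∈ s, conj (c i) * a ((b i : Vh) : V) p := by
          intro s
          induction s using Finset.induction with
          | empty => simpa using ha0v p
          | @insert x s hx ih =>
              rw [Finset.sum_insert hx, Finset.sum_insert hx, ha_addv, ih]
              congr 1
              have hcoe : ((conj (c x) • b x : Vh) : V) = conj (c x) • ((b x : Vh) : V) := rfl
              rw [hcoe, ha_smulv]
        exact this Finset.univ
      have hsingle : ∀ (i : Fin m) (z : ℂ), F (Pi.single i z) = z * c i := by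
        intro i z
        have hz : Pi.single i z = z • (Pi.single i (1 : ℂ) : Fin m → ℂ) := by
          funext j
          simp [Pi.single_apply]
        rw [hz, map_smul, smul_eq_mul, hc]
      have h2 : (fun i => conj (a ((b i : Vh) : V) p))
          = ∑ i, Pi.single i (conj (a ((b i : Vh) : V) p)) :=
        (Finset.univ_sum_single _).symm
      rw [h2, map_sum]
      simp only [hsingle]
      rw [h1, map_sum]
      refine Finset.sum_congr rfl fun i _ => ?_
      simp [map_mul, mul_comm]
    -- `u` is positive
    have hu0 : 0 < u := by
      have h0S : (0 : Fin m → ℂ) ∈ S := ⟨0, by simpa using hR0.le, map_zero Ψ⟩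
      have := hfS 0 h0S
      simpa using this
    -- every discrete ratio is bounded by `u / R`
    have hub : ∀ wh : Wh, ‖a ((v₀ : Vh) : V) (wh : W)‖ / ‖(wh : W)‖ ≤ u / R := by
      intro wh
      rcases eq_or_ne (wh : W) 0 with h0 | h0
      · rw [h0]
        simp [ha0w, div_nonneg hu0.le hR0.le]
      · have hwh0 : 0 < ‖(wh : W)‖ := norm_pos_iff.mpr h0
        set p : W := (R / ‖(wh : W)‖) • (wh : W) with hp
        have hpW : p ∈ Wh := Wh.smul_of_tower_mem _ wh.2
        have hpnorm : ‖p‖ = R := by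
          rw [hp, norm_smul, Real.norm_eq_abs, abs_of_pos (div_pos hR0 hwh0)]
          field_simp
        set z : ℂ := a ((v₀ : Vh) : V) p with hz
        set lam : ℂ := if z = 0 then 1 else z / ‖z‖ with hlam
        have hlamnorm : ‖lam‖ = 1 := by
          rw [hlam]
          split_ifs with h
          · simp
          · rw [norm_div]
            simp only [Complex.norm_real, Real.norm_eq_abs, abs_norm]
            exact div_self (norm_ne_zero_iff.mpr h)
        have hq'W : lam • p ∈ Wh := Wh.smul_mem lam hpW
        set q' : Wh := ⟨lam • p, hq'W⟩ with hq'
        have hq'ball : q' ∈ Metric.closedBall (0 : Wh) R := by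
          simp only [Metric.mem_closedBall, dist_zero_right]
          have : ‖q'‖ = ‖lam • p‖ := rfl
          rw [this, norm_smul, hlamnorm, one_mul, hpnorm]
        have hlt : f (Ψ q') < u := hfS _ ⟨q', hq'ball, rfl⟩
        -- compute `f (Ψ q')`
        have hfq' : f (Ψ q') = ‖z‖ := by
          have h1 : f (Ψ q') = (F (Ψ q')).re := (hF_re _).symm
          have h2 : Ψ q' = fun i => conj (a ((b i : Vh) : V) (lam • p)) := rfl
          have h3 : F (Ψ q') = conj (a ((v₀ : Vh) : V) (lam • p)) := by
            rw [h2]; exact hrep (lam • p)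
          have h4 : a ((v₀ : Vh) : V) (lam • p) = conj lam * z := by
            rw [ha_smulw, hz]
          rw [h1, h3, h4, map_mul]
          simp only [RingHomCompTriple.comp_apply, RingHom.id_apply, Complex.conj_conj]
          rw [hlam]
          split_ifs with h
          · simp [h]
          · rw [div_mul_eq_mul_div, Complex.mul_conj]
            simp [Complex.normSq_eq_norm_sq, Complex.sq_norm, pow_two,
              mul_div_assoc, div_self (norm_pos_iff.mpr h).ne']
        have hzlt : ‖z‖ < u := by rw [← hfq']; exact hlt
        -- relate `z` to `a v₀ wh`
        have hzwh : ‖z‖ = (R / ‖(wh : W)‖) * ‖a ((v₀ : Vh) : V) (wh : W)‖ := by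
          rw [hz, hp, ha_rsmulw, norm_mul, Complex.norm_real, Real.norm_eq_abs,
            abs_of_pos (div_pos hR0 hwh0)]
        rw [div_le_div_iff₀ hwh0 hR0]
        have := hzlt
        rw [hzwh] at this
        calc ‖a ((v₀ : Vh) : V) (wh : W)‖ * R
            = ((R / ‖(wh : W)‖) * ‖a ((v₀ : Vh) : V) (wh : W)‖) * ‖(wh : W)‖ := by
              field_simp
          _ ≤ u * ‖(wh : W)‖ := by
              exact mul_le_mul_of_nonneg_right this.le (norm_nonneg _)
    -- inf-sup gives `na ‖w‖ ‖v₀‖ ≤ u`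
    have h1 : αh * ‖((v₀ : Vh) : V)‖ ≤ u / R :=
      (hαh _ v₀.2).trans (Real.iSup_le hub (div_nonneg hu0.le hR0.le))
    have h2 : na * ‖w‖ * ‖((v₀ : Vh) : V)‖ ≤ u := by
      have := mul_le_mul_of_nonneg_right h1 hR0.le
      rw [div_mul_cancel₀ _ hR0.ne'] at this
      calc na * ‖w‖ * ‖((v₀ : Vh) : V)‖ = αh * ‖((v₀ : Vh) : V)‖ * R := by
            rw [← hαR]; ring
        _ ≤ u := this
    -- the separating functional evaluated at `t`
    have h3 : u < na * ‖((v₀ : Vh) : V)‖ * ‖w‖ := by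
      have hFt : F t = conj (a ((v₀ : Vh) : V) w) := hrep w
      have : f t ≤ ‖a ((v₀ : Vh) : V) w‖ := by
        rw [← hF_re t, hFt]
        calc (conj (a ((v₀ : Vh) : V) w)).re ≤ ‖conj (a ((v₀ : Vh) : V) w)‖ :=
              Complex.re_le_norm _
          _ = ‖a ((v₀ : Vh) : V) w‖ := by rw [RCLike.norm_conj]
      exact lt_of_lt_of_le hft (this.trans (hna _ _))
    nlinarith [h2, h3]


/-- Converse of Fortin's Lemma: the discrete inf-sup condition implies the
existence of a (possibly nonlinear) Fortin operator with stability constant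
`α̂ / ‖a‖`. -/
theorem converse_fortin_idempotent
    {V W : Type*} [NormedAddCommGroup V] [NormedSpace ℂ V] [CompleteSpace V]
    [NormedAddCommGroup W] [NormedSpace ℂ W] [CompleteSpace W]
    (a : V → W → ℂ)
    (ha_addv : ∀ v v' w, a (v + v') w = a v w + a v' w)
    (ha_smulv : ∀ (c : ℂ) v w, a (c • v) w = c * a v w)
    (ha_addw : ∀ v w w', a v (w + w') = a v w + a v w')
    (ha_smulw : ∀ v (c : ℂ) w, a v (c • w) = conj c * a v w)
    (na : ℝ) (hna0 : 0 < na) (hna : ∀ v w, ‖a v w‖ ≤ na * ‖v‖ * ‖w‖)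
    (Vh : Submodule ℂ V) (Wh : Submodule ℂ W)
    [FiniteDimensional ℂ Vh] [FiniteDimensional ℂ Wh]
    -- the discrete inf-sup condition with constant `α̂ > 0`
    (αh : ℝ) (hαh0 : 0 < αh)
    (hαh : ∀ v ∈ Vh, αh * ‖v‖ ≤ ⨆ wh : Wh, ‖a v (wh : W)‖ / ‖(wh : W)‖) :
    ∃ P : W → W, (∀ w, P w ∈ Wh) ∧
      (∀ w, ∀ v ∈ Vh, a v (P w - w) = 0) ∧
      (∀ w : W, (αh / na) * ‖P w‖ ≤ ‖w‖) ∧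
      ∀ w : W, P (P w) = P w := by
  classical
  have ha0w : ∀ v, a v (0 : W) = 0 := by
    intro v
    simpa using ha_smulw v 0 0
  have ha0v : ∀ x, a (0 : V) x = 0 := by
    intro x
    simpa using ha_smulv 0 0 x
  have ha_subw : ∀ v p q, a v (p - q) = a v p - a v q := by
    intro v p q
    have h := ha_addw v (p - q) q
    rw [sub_add_cancel] at h
    rw [h]; ring
  by_cases hV : Vh = ⊥
  · -- trivial case: `Vh = ⊥`, take `P = 0`
    refine ⟨fun _ => 0, fun _ => Wh.zero_mem, ?_, ?_, fun _ => rfl⟩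
    · intro w v hv
      have : v = 0 := by simpa [hV] using hv
      rw [this, ha0v]
    · intro w
      simpa using norm_nonneg w
  · -- nontrivial case
    -- first, `αh ≤ na`
    obtain ⟨v, hvVh, hv0⟩ := Submodule.exists_mem_ne_zero_of_ne_bot hV
    have hαna : αh ≤ na := by
      have hsup : (⨆ wh : Wh, ‖a v (wh : W)‖ / ‖(wh : W)‖) ≤ na * ‖v‖ := by
        refine Real.iSup_le (fun wh => ?_) (by positivity)
        rcases eq_or_ne (wh : W) 0 with h0 | h0
        · rw [h0]; simp [ha0w]; positivity
        · rw [div_le_iff₀ (norm_pos_iff.mpr h0)]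
          calc ‖a v (wh : W)‖ ≤ na * ‖v‖ * ‖(wh : W)‖ := hna _ _
            _ = na * ‖v‖ * ‖(wh : W)‖ := rfl
      have h := (hαh v hvVh).trans hsup
      have hv : 0 < ‖v‖ := norm_pos_iff.mpr hv0
      exact le_of_mul_le_mul_right (by linarith [h]) hv
    choose s hs1 hs2 hs3 using
      fun w => fortin_key a ha_addv ha_smulv ha_addw ha_smulw na hna0 hna
        Vh Wh αh hαh0 hαh w
    refine ⟨fun w => if w ∈ Wh then w else s w, ?_, ?_, ?_, ?_⟩
    · intro w
      by_cases h : w ∈ Wh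
      · simpa [h] using h
      · simpa [h] using hs1 w
    · intro w v hv
      dsimp only
      by_cases h : w ∈ Wh
      · simp only [if_pos h, sub_self, ha0w]
      · rw [if_neg h, ha_subw, hs2 w v hv, sub_self]
    · intro w
      dsimp only
      by_cases h : w ∈ Wh
      · rw [if_pos h]
        calc (αh / na) * ‖w‖ ≤ 1 * ‖w‖ := by
              apply mul_le_mul_of_nonneg_right _ (norm_nonneg w)
              rw [div_le_one hna0]
              exact hαna
          _ = ‖w‖ := one_mul _
      · rw [if_neg h]
        rw [div_mul_eq_mul_div, div_le_iff₀ hna0, mul_comm ‖w‖ na]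
        exact hs3 w
    · intro w
      dsimp only
      have hPw : (if w ∈ Wh then w else s w) ∈ Wh := by
        by_cases h : w ∈ Wh
        · simpa [h] using h
        · simpa [h] using hs1 w
      rw [if_pos hPw]
end

section
/- Let V and W be complex spaces with W a Hilbert space, a a bounded sesquilinear form on V × W, and V_h ⊂ V, W_h ⊂ W finite-dimensional subspaces satisfying the discrete inf-sup condition with constant α̂ > 0. Then there exists a *linear* map Π_h : W → W_h such that a(v_h, Π_h w − w) = 0 for all v_h ∈ V_h, w ∈ W, and (α̂/‖a‖) ‖Π_h w‖_W ≤ ‖w‖_W for all w ∈ W. -/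
open scoped ComplexConjugate
open scoped InnerProductSpace

/-- Converse of Fortin's Lemma in the Hilbertian setting: when `W` is a Hilbert
space, the Fortin operator can be constructed to be linear. -/
theorem converse_fortin_linear_hilbert
    {V W : Type*} [NormedAddCommGroup V] [NormedSpace ℂ V] [CompleteSpace V]
    [NormedAddCommGroup W] [InnerProductSpace ℂ W] [CompleteSpace W]
    (a : V → W → ℂ)
    (ha_addv : ∀ v v' w, a (v + v') w = a v w + a v' w)
    (ha_smulv : ∀ (c : ℂ) v w, a (c • v) w = c * a v w)
    (ha_addw : ∀ v w w', a v (w + w') = a v w + a v w')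
    (ha_smulw : ∀ v (c : ℂ) w, a v (c • w) = conj c * a v w)
    (na : ℝ) (hna0 : 0 < na) (hna : ∀ v w, ‖a v w‖ ≤ na * ‖v‖ * ‖w‖)
    (Vh : Submodule ℂ V) (Wh : Submodule ℂ W)
    [FiniteDimensional ℂ Vh] [FiniteDimensional ℂ Wh]
    (αh : ℝ) (hαh0 : 0 < αh)
    (hαh : ∀ v ∈ Vh, αh * ‖v‖ ≤ ⨆ wh : Wh, ‖a v (wh : W)‖ / ‖(wh : W)‖) :
    ∃ P : W →ₗ[ℂ] W, (∀ w, P w ∈ Wh) ∧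
      (∀ w, ∀ v ∈ Vh, a v (P w - w) = 0) ∧
      ∀ w : W, (αh / na) * ‖P w‖ ≤ ‖w‖ := by
  classical
  have ha0w : ∀ v, a v 0 = 0 := by
    intro v
    have h := ha_addw v 0 0
    rw [add_zero] at h
    exact left_eq_add.mp h
  have hsub : ∀ (v : V) (x y : W), a v (x - y) = a v x - a v y := by
    intro v x y
    have h := ha_addw v (x - y) y
    rw [sub_add_cancel] at h
    exact eq_sub_of_add_eq h.symm
  -- The kernel N inside Wh
  let N : Submodule ℂ W :=
    { carrier := {x | x ∈ Wh ∧ ∀ v ∈ Vh, a v x = 0}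
      add_mem' := by
        rintro x y ⟨hx1, hx2⟩ ⟨hy1, hy2⟩
        exact ⟨Wh.add_mem hx1 hy1, fun v hv => by
          rw [ha_addw, hx2 v hv, hy2 v hv, add_zero]⟩
      zero_mem' := ⟨Wh.zero_mem, fun v _ => ha0w v⟩
      smul_mem' := by
        rintro c x ⟨hx1, hx2⟩
        exact ⟨Wh.smul_mem c hx1, fun v hv => by
          rw [ha_smulw, hx2 v hv, mul_zero]⟩ }
  have hNmem : ∀ x : W, x ∈ N ↔ x ∈ Wh ∧ ∀ v ∈ Vh, a v x = 0 := fun x => Iff.rfl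
  have hNle : N ≤ Wh := fun x hx => ((hNmem x).mp hx).1
  haveI : FiniteDimensional ℂ N := Submodule.finiteDimensional_of_le hNle
  haveI : CompleteSpace N := FiniteDimensional.complete ℂ N
  -- Y: the orthogonal complement of N inside Wh
  let Y : Submodule ℂ W := Nᗮ ⊓ Wh
  have hYle : Y ≤ Wh := inf_le_right
  haveI : FiniteDimensional ℂ Y := Submodule.finiteDimensional_of_le hYle
  haveI : CompleteSpace Y := FiniteDimensional.complete ℂ Y
  -- decomposition of Wh with norm control
  have hdecomp : ∀ x ∈ Wh, ∃ u : Y, ‖(u : W)‖ ≤ ‖x‖ ∧ x - (u : W) ∈ N := by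
    intro x hx
    set n : W := (N.orthogonalProjection x : W) with hn
    have hnN : n ∈ N := (N.orthogonalProjection x).2
    have hxnY : x - n ∈ Y := by
      refine ⟨N.sub_starProjection_mem_orthogonal x, ?_⟩
      exact Wh.sub_mem hx (hNle hnN)
    refine ⟨⟨x - n, hxnY⟩, ?_, by simpa using hnN⟩
    have hinner : ⟪n, x - n⟫_ℂ = 0 :=
      (Submodule.mem_orthogonal N (x - n)).mp (N.sub_starProjection_mem_orthogonal x) n hnN
    have hsq := norm_add_sq_eq_norm_sq_add_norm_sq_of_inner_eq_zero n (x - n) hinner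
    rw [add_sub_cancel] at hsq
    have h1 : (0:ℝ) ≤ ‖n‖ := norm_nonneg _
    have h2 : (0:ℝ) ≤ ‖x - n‖ := norm_nonneg _
    have h3 : (0:ℝ) ≤ ‖x‖ := norm_nonneg _
    simp only [Submodule.coe_norm]
    nlinarith [hsq]
  -- key inf-sup consequence
  have hkey : ∀ (v : Vh) (C : ℝ), 0 ≤ C → (∀ u : Y, ‖a (v : V) (u : W)‖ ≤ C * ‖(u : W)‖) →
      αh * ‖(v : V)‖ ≤ C := by
    intro v C hC0 hC
    refine le_trans (hαh (v : V) v.2) (Real.iSup_le ?_ hC0)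
    intro wh
    obtain ⟨u, hu, hmem⟩ := hdecomp (wh : W) wh.2
    have hz : a (v : V) ((wh : W) - (u : W)) = 0 := ((hNmem _).mp hmem).2 (v : V) v.2
    rw [hsub] at hz
    have heq : a (v : V) (wh : W) = a (v : V) (u : W) := sub_eq_zero.mp hz
    rcases eq_or_lt_of_le (norm_nonneg (wh : W)) with h0 | h0
    · simp only [← h0, div_zero]; exact hC0
    · rw [div_le_iff₀ h0, heq]
      calc ‖a (v : V) (u : W)‖ ≤ C * ‖(u : W)‖ := hC u
        _ ≤ C * ‖(wh : W)‖ := mul_le_mul_of_nonneg_left hu hC0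
  -- the Riesz map T : Vh → Y
  let g : Vh → (Y →ₗ[ℂ] ℂ) := fun v =>
    { toFun := fun u => conj (a (v : V) (u : W))
      map_add' := by
        intro u u'
        simp only [Submodule.coe_add, ha_addw, map_add]
      map_smul' := by
        intro c u
        simp only [Submodule.coe_smul, ha_smulw, map_mul, RingHom.id_apply,
          Complex.conj_conj, smul_eq_mul] }
  let T0 : Vh → Y := fun v =>
    (InnerProductSpace.toDual ℂ Y).symm (LinearMap.toContinuousLinearMap (g v))
  have hT0 : ∀ (v : Vh) (u : Y), ⟪T0 v, u⟫_ℂ = conj (a (v : V) (u : W)) := by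
    intro v u
    exact InnerProductSpace.toDual_symm_apply
  have haT : ∀ (v : Vh) (u : Y), a (v : V) (u : W) = ⟪u, T0 v⟫_ℂ := by
    intro v u
    rw [← inner_conj_symm, hT0, Complex.conj_conj]
  have hext : ∀ x y : Y, (∀ u : Y, ⟪x, u⟫_ℂ = ⟪y, u⟫_ℂ) → x = y := by
    intro x y h
    exact ext_inner_right ℂ h
  let T : Vh →ₗ[ℂ] Y :=
    { toFun := T0
      map_add' := by
        intro v v'
        refine hext _ _ fun u => ?_
        rw [hT0, inner_add_left, hT0, hT0, Submodule.coe_add, ha_addv, map_add]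
      map_smul' := by
        intro c v
        refine hext _ _ fun u => ?_
        rw [hT0, RingHom.id_apply, inner_smul_left, hT0, Submodule.coe_smul,
          ha_smulv, map_mul] }
  have hTapp : ∀ v : Vh, T v = T0 v := fun _ => rfl
  -- injectivity of T
  have hTker : ∀ v : Vh, T v = 0 → v = 0 := by
    intro v hv
    have hz : ∀ u : Y, a (v : V) (u : W) = 0 := by
      intro u
      rw [haT v u, ← hTapp, hv, inner_zero_right]
    have hb : αh * ‖(v : V)‖ ≤ 0 := hkey v 0 le_rfl (fun u => by rw [hz u]; simp)
    have : ‖(v : V)‖ = 0 := le_antisymm (nonpos_of_mul_nonpos_right hb hαh0) (norm_nonneg _)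
    exact Subtype.ext (norm_eq_zero.mp this)
  have hTinj : Function.Injective T := by
    intro x y hxy
    have := hTker (x - y) (by rw [map_sub, hxy, sub_self])
    exact sub_eq_zero.mp this
  -- surjectivity of T
  have hTsurj : Function.Surjective T := by
    rw [← LinearMap.range_eq_top]
    haveI : FiniteDimensional ℂ (LinearMap.range T) := inferInstance
    rw [← Submodule.orthogonal_eq_bot_iff]
    rw [Submodule.eq_bot_iff]
    intro y hy
    have hz : ∀ v : Vh, a (v : V) (y : W) = 0 := by
      intro v
      have h2 : ⟪T v, y⟫_ℂ = 0 := hy (T v) (LinearMap.mem_range_self T v)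
      rw [hTapp] at h2
      rw [haT v y, ← inner_conj_symm, h2, map_zero]
    have hyN : (y : W) ∈ N := by
      refine (hNmem _).mpr ⟨hYle y.2, fun v hv => hz ⟨v, hv⟩⟩
    have hyO : (y : W) ∈ Nᗮ := y.2.1
    have : ⟪(y : W), (y : W)⟫_ℂ = 0 :=
      (Submodule.mem_orthogonal N (y : W)).mp hyO (y : W) hyN
    have : (y : W) = 0 := inner_self_eq_zero.mp this
    exact Subtype.ext (by exact_mod_cast this)
  let E : Vh ≃ₗ[ℂ] Y := LinearEquiv.ofBijective T ⟨hTinj, hTsurj⟩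
  have hE : ∀ v : Vh, E v = T v := fun _ => rfl
  -- pointwise existence
  have exi : ∀ w : W, ∃ y : W, y ∈ Y ∧ (∀ v ∈ Vh, a v y = a v w) ∧
      αh * ‖y‖ ≤ na * ‖w‖ := by
    intro w
    let ℓ : Vh →ₗ[ℂ] ℂ :=
      { toFun := fun v => a (v : V) w
        map_add' := by intro v v'; simp only [Submodule.coe_add, ha_addv]
        map_smul' := by intro c v; simp only [Submodule.coe_smul, ha_smulv, RingHom.id_apply, smul_eq_mul] }
    let ψ : Y →ₗ[ℂ] ℂ := ℓ.comp E.symm.toLinearMap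
    let y0 : Y := (InnerProductSpace.toDual ℂ Y).symm (LinearMap.toContinuousLinearMap ψ)
    have hy0 : ∀ u : Y, ⟪y0, u⟫_ℂ = a ((E.symm u : Vh) : V) w := by
      intro u
      exact InnerProductSpace.toDual_symm_apply
    have solves : ∀ v : Vh, a (v : V) ((y0 : Y) : W) = a (v : V) w := by
      intro v
      have hsv : E.symm (T v) = v := by rw [← hE]; exact E.symm_apply_apply v
      rw [haT v y0, ← hTapp, hy0 (T v), hsv]
    refine ⟨(y0 : W), y0.2, fun v hv => solves ⟨v, hv⟩, ?_⟩
    rcases eq_or_ne (y0 : W) 0 with hy | hy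
    · rw [hy, norm_zero, mul_zero]
      positivity
    · have hy0pos : 0 < ‖(y0 : W)‖ := norm_pos_iff.mpr hy
      set v : Vh := E.symm y0 with hv
      have hTv : T v = y0 := by rw [← hE]; exact E.apply_symm_apply y0
      have h1 : αh * ‖(v : V)‖ ≤ ‖(y0 : W)‖ := by
        refine hkey v ‖(y0 : W)‖ (norm_nonneg _) fun u => ?_
        rw [haT v u, ← hTapp, hTv]
        calc ‖(⟪u, y0⟫_ℂ)‖ ≤ ‖u‖ * ‖y0‖ := norm_inner_le_norm u y0
          _ = ‖(y0 : W)‖ * ‖(u : W)‖ := by rw [mul_comm]; rfl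
      have h2 : a (v : V) ((y0 : Y) : W) = (‖(y0 : W)‖ : ℂ) ^ 2 := by
        rw [haT v y0, ← hTapp, hTv, inner_self_eq_norm_sq_to_K]
        norm_num [Submodule.coe_norm]
      have h3 : ‖(y0 : W)‖ ^ 2 ≤ na * ‖(v : V)‖ * ‖w‖ := by
        have := hna (v : V) w
        rw [← solves v, h2] at this
        calc ‖(y0 : W)‖ ^ 2 = ‖((‖(y0 : W)‖ : ℂ)) ^ 2‖ := by
              rw [norm_pow, Complex.norm_real, norm_norm]
          _ ≤ na * ‖(v : V)‖ * ‖w‖ := this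
      nlinarith [mul_le_mul_of_nonneg_left h3 hαh0.le,
        mul_le_mul_of_nonneg_left h1 (mul_nonneg hna0.le (norm_nonneg w)), hy0pos,
        norm_nonneg (v : V)]
  -- uniqueness in Y
  have uniq : ∀ y y' : W, y ∈ Y → y' ∈ Y → (∀ v ∈ Vh, a v y = a v y') → y = y' := by
    intro y y' hy hy' h
    have hd : y - y' ∈ N := by
      refine (hNmem _).mpr ⟨Wh.sub_mem (hYle hy) (hYle hy'), fun v hv => ?_⟩
      rw [hsub, h v hv, sub_self]
    have hdO : y - y' ∈ Nᗮ := Nᗮ.sub_mem hy.1 hy'.1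
    have : ⟪y - y', y - y'⟫_ℂ = 0 :=
      (Submodule.mem_orthogonal N (y - y')).mp hdO (y - y') hd
    exact sub_eq_zero.mp (inner_self_eq_zero.mp this)
  choose Pf hPf1 hPf2 hPf3 using exi
  let P : W →ₗ[ℂ] W :=
    { toFun := Pf
      map_add' := by
        intro w w'
        refine uniq _ _ (hPf1 (w + w')) (Y.add_mem (hPf1 w) (hPf1 w')) fun v hv => ?_
        rw [hPf2 (w + w') v hv, ha_addw, ha_addw, hPf2 w v hv, hPf2 w' v hv]
      map_smul' := by
        intro c w
        refine uniq _ _ (hPf1 (c • w)) (Y.smul_mem c (hPf1 w)) fun v hv => ?_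
        rw [hPf2 (c • w) v hv, ha_smulw, ha_smulw, hPf2 w v hv]
        rfl }
  refine ⟨P, fun w => hYle (hPf1 w), fun w v hv => ?_, fun w => ?_⟩
  · show a v (Pf w - w) = 0
    rw [hsub, hPf2 w v hv, sub_self]
  · show αh / na * ‖Pf w‖ ≤ ‖w‖
    rw [div_mul_eq_mul_div, div_le_iff₀ hna0]
    calc αh * ‖Pf w‖ ≤ na * ‖w‖ := hPf3 w
      _ = ‖w‖ * na := mul_comm _ _
end

section
/- Let Y and Z be complex Banach spaces with Y reflexive, and let B : Y → Z be a bounded linear bijection. Then inf_{y∈Y} sup_{z'∈Z'} |⟨z', By⟩|/(‖z'‖_{Z'} ‖y‖_Y) = inf_{z'∈Z'} sup_{y∈Y} |⟨z', By⟩|/(‖z'‖_{Z'} ‖y‖_Y), where all infima and suprema are over nonzero elements. -/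
open NormedSpace

/-- Supremum over nonzero dual vectors of `‖z' z‖ / (‖z'‖ * c)` equals `‖z‖ / c`. -/
lemma aux_sup_dual_ratio {Z : Type*} [NormedAddCommGroup Z] [NormedSpace ℂ Z]
    {z : Z} (hz : z ≠ 0) {c : ℝ} (hc : 0 < c) :
    ⨆ z' : {z' : StrongDual ℂ Z // z' ≠ 0},
      ‖(z' : StrongDual ℂ Z) z‖ / (‖(z' : StrongDual ℂ Z)‖ * c) = ‖z‖ / c := by
  obtain ⟨g, hg1, hgz⟩ := exists_dual_vector ℂ z (norm_ne_zero_iff.mpr hz)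
  have hg0 : g ≠ 0 := by
    intro h; rw [h] at hg1; simp at hg1
  haveI : Nonempty {z' : StrongDual ℂ Z // z' ≠ 0} := ⟨⟨g, hg0⟩⟩
  have hub : ∀ z' : {z' : StrongDual ℂ Z // z' ≠ 0},
      ‖(z' : StrongDual ℂ Z) z‖ / (‖(z' : StrongDual ℂ Z)‖ * c) ≤ ‖z‖ / c := by
    rintro ⟨z', hz'⟩
    have h1 : (0:ℝ) < ‖z'‖ := norm_pos_iff.mpr hz'
    have h2 : ‖z' z‖ ≤ ‖z'‖ * ‖z‖ := z'.le_opNorm z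
    rw [div_le_div_iff₀ (by positivity) hc]
    nlinarith
  refine le_antisymm (ciSup_le hub) ?_
  have hle := le_ciSup ⟨‖z‖ / c, Set.forall_mem_range.mpr hub⟩
    (⟨g, hg0⟩ : {z' : StrongDual ℂ Z // z' ≠ 0})
  have hgz' : ‖g z‖ = ‖z‖ := by
    rw [hgz]; simp [Complex.norm_real, abs_of_nonneg (norm_nonneg z)]
  calc ‖z‖ / c = ‖g z‖ / (‖g‖ * c) := by rw [hgz', hg1, one_mul]
    _ ≤ _ := hle

/-- Supremum over nonzero vectors of `‖f v‖ / (c * ‖v‖)` equals `‖f‖ / c`. -/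
lemma aux_sup_ratio {V W : Type*} [NormedAddCommGroup V] [NormedSpace ℂ V]
    [NormedAddCommGroup W] [NormedSpace ℂ W] [Nontrivial V]
    (f : V →L[ℂ] W) {c : ℝ} (hc : 0 < c) :
    ⨆ v : {v : V // v ≠ 0}, ‖f (v : V)‖ / (c * ‖(v : V)‖) = ‖f‖ / c := by
  obtain ⟨v₀, hv₀⟩ := exists_ne (0 : V)
  haveI : Nonempty {v : V // v ≠ 0} := ⟨⟨v₀, hv₀⟩⟩
  have hub : ∀ v : {v : V // v ≠ 0}, ‖f (v : V)‖ / (c * ‖(v : V)‖) ≤ ‖f‖ / c := by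
    rintro ⟨v, hv⟩
    have h1 : (0:ℝ) < ‖v‖ := norm_pos_iff.mpr hv
    have h2 : ‖f v‖ ≤ ‖f‖ * ‖v‖ := f.le_opNorm v
    rw [div_le_div_iff₀ (by positivity) hc]
    nlinarith [norm_nonneg f]
  refine le_antisymm (ciSup_le hub) ?_
  set M := ⨆ v : {v : V // v ≠ 0}, ‖f (v : V)‖ / (c * ‖(v : V)‖) with hM
  have hbdd : BddAbove (Set.range fun v : {v : V // v ≠ 0} =>
      ‖f (v : V)‖ / (c * ‖(v : V)‖)) := ⟨‖f‖ / c, Set.forall_mem_range.mpr hub⟩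
  have hM0 : 0 ≤ M := le_trans (by positivity) (le_ciSup hbdd (⟨v₀, hv₀⟩ : {v : V // v ≠ 0}))
  rw [div_le_iff₀ hc]
  refine f.opNorm_le_bound (by positivity) fun v => ?_
  rcases eq_or_ne v 0 with rfl | hv
  · simp
  · have h1 : (0:ℝ) < ‖v‖ := norm_pos_iff.mpr hv
    have := le_ciSup hbdd (⟨v, hv⟩ : {v : V // v ≠ 0})
    rw [div_le_iff₀ (by positivity)] at this
    calc ‖f v‖ ≤ M * (c * ‖v‖) := this
      _ = M * c * ‖v‖ := by ring

/-- For a continuous linear equivalence, the infimum of `‖e v‖/‖v‖` over nonzero `v`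
is `‖e.symm‖⁻¹`. -/
lemma aux_inf_ratio {V W : Type*} [NormedAddCommGroup V] [NormedSpace ℂ V]
    [NormedAddCommGroup W] [NormedSpace ℂ W] [Nontrivial V]
    (e : V ≃L[ℂ] W) (g : {v : V // v ≠ 0} → ℝ)
    (hg : ∀ v : {v : V // v ≠ 0}, g v = ‖e (v : V)‖ / ‖(v : V)‖) :
    ⨅ v : {v : V // v ≠ 0}, g v = ‖(e.symm : W →L[ℂ] V)‖⁻¹ := by
  obtain ⟨v₀, hv₀⟩ := exists_ne (0 : V)
  haveI : Nonempty {v : V // v ≠ 0} := ⟨⟨v₀, hv₀⟩⟩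
  set c : ℝ := ‖(e.symm : W →L[ℂ] V)‖ with hcdef
  have hc : 0 < c := by
    rcases eq_or_lt_of_le (norm_nonneg (e.symm : W →L[ℂ] V)) with h | h
    · exfalso
      have : (e.symm : W →L[ℂ] V) = 0 := by
        rwa [eq_comm, norm_eq_zero] at h
      have h0 : e.symm (e v₀) = v₀ := e.symm_apply_apply v₀
      rw [show e.symm (e v₀) = (e.symm : W →L[ℂ] V) (e v₀) from rfl, this] at h0
      exact hv₀ (by simpa using h0.symm)
    · exact h
  have hbdd : BddBelow (Set.range g) := by
    refine ⟨0, Set.forall_mem_range.mpr fun v => ?_⟩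
    rw [hg v]; positivity
  refine le_antisymm ?_ ?_
  · by_contra h
    push_neg at h
    set m := ⨅ v : {v : V // v ≠ 0}, g v with hm
    have hm0 : 0 < m := lt_trans (by positivity) h
    have hbound : ∀ w : W, ‖e.symm w‖ ≤ m⁻¹ * ‖w‖ := by
      intro w
      rcases eq_or_ne (e.symm w) 0 with h0 | h0
      · rw [h0, norm_zero]; positivity
      · have hle := ciInf_le hbdd (⟨e.symm w, h0⟩ : {v : V // v ≠ 0})
        rw [hg] at hle
        have hw : e (e.symm w) = w := e.apply_symm_apply w
        rw [hw] at hle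
        have hv1 : (0:ℝ) < ‖e.symm w‖ := norm_pos_iff.mpr h0
        rw [le_div_iff₀ hv1] at hle
        calc ‖e.symm w‖ = m⁻¹ * (m * ‖e.symm w‖) := by field_simp
          _ ≤ m⁻¹ * ‖w‖ := by
              have := hle
              have hmi : (0:ℝ) ≤ m⁻¹ := by positivity
              nlinarith
    have hcm : c ≤ m⁻¹ :=
      ContinuousLinearMap.opNorm_le_bound _ (by positivity) hbound
    have hcm' : c * m ≤ 1 := by
      have h2 := mul_le_mul_of_nonneg_right hcm hm0.le
      rwa [inv_mul_cancel₀ (ne_of_gt hm0)] at h2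
    nlinarith [mul_lt_mul_of_pos_left h hc, mul_inv_cancel₀ (ne_of_gt hc)]
  · refine le_ciInf fun v => ?_
    rw [hg v]
    have hv1 : (0:ℝ) < ‖(v : V)‖ := norm_pos_iff.mpr v.2
    rw [le_div_iff₀ hv1]
    have h1 : ‖(v : V)‖ ≤ c * ‖e (v : V)‖ := by
      have := (e.symm : W →L[ℂ] V).le_opNorm (e (v : V))
      rwa [show (e.symm : W →L[ℂ] V) (e (v : V)) = e.symm (e (v : V)) from rfl,
        e.symm_apply_apply] at this
    have hci : (0:ℝ) ≤ c⁻¹ := by positivity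
    nlinarith [mul_le_mul_of_nonneg_left h1 hci, inv_mul_cancel₀ (ne_of_gt hc),
      norm_nonneg (e (v : V))]

/-- For a bounded linear bijection `B : Y → Z` with `Y` reflexive, the inf-sup
constants of `B` and of its adjoint `B*` coincide. -/
theorem infSup_eq_infSup_adjoint
    {Y Z : Type*} [NormedAddCommGroup Y] [NormedSpace ℂ Y] [CompleteSpace Y]
    [NormedAddCommGroup Z] [NormedSpace ℂ Z] [CompleteSpace Z]
    -- `Y` is reflexive
    (hrefl : Function.Surjective (inclusionInDoubleDual ℂ Y))
    (B : Y →L[ℂ] Z) (hB : Function.Bijective B) :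
    (⨅ y : {y : Y // y ≠ 0}, ⨆ z' : {z' : StrongDual ℂ Z // z' ≠ 0},
        ‖(z' : StrongDual ℂ Z) (B (y : Y))‖ / (‖(z' : StrongDual ℂ Z)‖ * ‖(y : Y)‖)) =
      ⨅ z' : {z' : StrongDual ℂ Z // z' ≠ 0}, ⨆ y : {y : Y // y ≠ 0},
        ‖(z' : StrongDual ℂ Z) (B (y : Y))‖ / (‖(z' : StrongDual ℂ Z)‖ * ‖(y : Y)‖) := by
  rcases subsingleton_or_nontrivial Y with hY | hY
  · -- trivial case : Y = 0, hence Z = 0 and both index types are empty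
    haveI : Subsingleton Z := hB.surjective.subsingleton
    haveI hYe : IsEmpty {y : Y // y ≠ 0} :=
      ⟨fun y => y.2 (Subsingleton.elim _ _)⟩
    haveI hZe : IsEmpty {z' : StrongDual ℂ Z // z' ≠ 0} := by
      refine ⟨fun z' => z'.2 ?_⟩
      ext z
      rw [Subsingleton.elim z 0]
      simp
    rw [Real.iInf_of_isEmpty, Real.iInf_of_isEmpty]
  · -- nontrivial case
    have hinj : Function.Injective B := hB.injective
    -- B as a continuous linear equivalence (open mapping theorem)
    set e : Y ≃L[ℂ] Z := ContinuousLinearEquiv.ofBijective B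
      (LinearMap.ker_eq_bot.mpr hinj) (LinearMap.range_eq_top.mpr hB.surjective) with he
    have heB : ∀ y : Y, e y = B y := fun y => rfl
    -- Z is nontrivial
    obtain ⟨y₀, hy₀⟩ := exists_ne (0 : Y)
    have hBy₀ : B y₀ ≠ 0 := fun h => hy₀ (hinj (by simpa using h))
    haveI : Nontrivial Z := nontrivial_of_ne (B y₀) 0 hBy₀
    -- the dual is nontrivial
    obtain ⟨g₀, hg₀1, _⟩ := exists_dual_vector ℂ (B y₀) (norm_ne_zero_iff.mpr hBy₀)
    have hg₀0 : g₀ ≠ 0 := by intro h; rw [h] at hg₀1; simp at hg₀1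
    haveI : Nontrivial (StrongDual ℂ Z) := nontrivial_of_ne g₀ 0 hg₀0
    -- the induced dual equivalence E : Dual Z ≃L Dual Y, z' ↦ z' ∘ e
    set E : StrongDual ℂ Z ≃L[ℂ] StrongDual ℂ Y :=
      ContinuousLinearEquiv.arrowCongr e.symm (ContinuousLinearEquiv.refl ℂ ℂ) with hE
    have hEapp : ∀ (z' : StrongDual ℂ Z) (y : Y), (E z') y = z' (B y) := by
      intro z' y
      simp [hE, ContinuousLinearEquiv.arrowCongr, heB]
    have hEnorm : ∀ z' : StrongDual ℂ Z, ‖E z'‖ = ‖(z' : StrongDual ℂ Z).comp (B : Y →L[ℂ] Z)‖ := by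
      intro z'
      have h : (E z' : Y →L[ℂ] ℂ) = (z' : StrongDual ℂ Z).comp (B : Y →L[ℂ] Z) := by
        ext y; simp [hEapp]
      rw [h]
    -- norm of E.symm equals norm of e.symm
    have hEsymm : ‖(E.symm : StrongDual ℂ Y →L[ℂ] StrongDual ℂ Z)‖ = ‖(e.symm : Z →L[ℂ] Y)‖ := by
      have hEsapp : ∀ (w' : StrongDual ℂ Y) (z : Z), (E.symm w') z = w' (e.symm z) := by
        intro w' z
        simp [hE, ContinuousLinearEquiv.arrowCongr]
      refine le_antisymm ?_ ?_
      · refine ContinuousLinearMap.opNorm_le_bound _ (norm_nonneg _) fun w' => ?_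
        refine ContinuousLinearMap.opNorm_le_bound _ (by positivity) fun z => ?_
        rw [show (E.symm : StrongDual ℂ Y →L[ℂ] StrongDual ℂ Z) w' = E.symm w' from rfl, hEsapp]
        calc ‖w' (e.symm z)‖ ≤ ‖w'‖ * ‖e.symm z‖ := w'.le_opNorm _
          _ ≤ ‖w'‖ * (‖(e.symm : Z →L[ℂ] Y)‖ * ‖z‖) := by
              have h2 : ‖e.symm z‖ ≤ ‖(e.symm : Z →L[ℂ] Y)‖ * ‖z‖ :=
                (e.symm : Z →L[ℂ] Y).le_opNorm z
              exact mul_le_mul_of_nonneg_left h2 (norm_nonneg w')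
          _ = ‖(e.symm : Z →L[ℂ] Y)‖ * ‖w'‖ * ‖z‖ := by ring
      · refine ContinuousLinearMap.opNorm_le_bound _ (norm_nonneg (E.symm : StrongDual ℂ Y →L[ℂ] StrongDual ℂ Z)) fun z => ?_
        show ‖e.symm z‖ ≤ ‖(E.symm : StrongDual ℂ Y →L[ℂ] StrongDual ℂ Z)‖ * ‖z‖
        rcases eq_or_ne (e.symm z) 0 with h0 | h0
        · rw [h0, norm_zero]; positivity
        · obtain ⟨g, hg1, hgz⟩ := exists_dual_vector ℂ (e.symm z) (norm_ne_zero_iff.mpr h0)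
          have : ‖e.symm z‖ = ‖g (e.symm z)‖ := by
            rw [hgz]; simp [Complex.norm_real, abs_of_nonneg (norm_nonneg _)]
          rw [this, ← hEsapp g z]
          calc ‖(E.symm g) z‖ ≤ ‖E.symm g‖ * ‖z‖ := (E.symm g).le_opNorm z
            _ ≤ (‖(E.symm : StrongDual ℂ Y →L[ℂ] StrongDual ℂ Z)‖ * ‖g‖) * ‖z‖ := by
                have h2 : ‖E.symm g‖ ≤ ‖(E.symm : StrongDual ℂ Y →L[ℂ] StrongDual ℂ Z)‖ * ‖g‖ :=
                  (E.symm : StrongDual ℂ Y →L[ℂ] StrongDual ℂ Z).le_opNorm g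
                exact mul_le_mul_of_nonneg_right h2 (norm_nonneg z)
            _ = ‖(E.symm : StrongDual ℂ Y →L[ℂ] StrongDual ℂ Z)‖ * ‖z‖ := by rw [hg1]; ring
    -- compute LHS
    have hLHS : (⨅ y : {y : Y // y ≠ 0}, ⨆ z' : {z' : StrongDual ℂ Z // z' ≠ 0},
        ‖(z' : StrongDual ℂ Z) (B (y : Y))‖ / (‖(z' : StrongDual ℂ Z)‖ * ‖(y : Y)‖))
        = ‖(e.symm : Z →L[ℂ] Y)‖⁻¹ := by
      refine aux_inf_ratio e _ fun y => ?_
      have hy : (y : Y) ≠ 0 := y.2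
      have hBy : B (y : Y) ≠ 0 := fun h => hy (hinj (by simpa using h))
      have hny : (0:ℝ) < ‖(y : Y)‖ := norm_pos_iff.mpr hy
      rw [aux_sup_dual_ratio hBy hny, heB]
    -- compute RHS
    have hRHS : (⨅ z' : {z' : StrongDual ℂ Z // z' ≠ 0}, ⨆ y : {y : Y // y ≠ 0},
        ‖(z' : StrongDual ℂ Z) (B (y : Y))‖ / (‖(z' : StrongDual ℂ Z)‖ * ‖(y : Y)‖))
        = ‖(E.symm : StrongDual ℂ Y →L[ℂ] StrongDual ℂ Z)‖⁻¹ := by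
      refine aux_inf_ratio E _ fun z' => ?_
      have hz' : (z' : StrongDual ℂ Z) ≠ 0 := z'.2
      have hnz : (0:ℝ) < ‖(z' : StrongDual ℂ Z)‖ := norm_pos_iff.mpr hz'
      have : (⨆ y : {y : Y // y ≠ 0},
          ‖(z' : StrongDual ℂ Z) (B (y : Y))‖ / (‖(z' : StrongDual ℂ Z)‖ * ‖(y : Y)‖))
          = ⨆ y : {y : Y // y ≠ 0},
          ‖((z' : StrongDual ℂ Z).comp (B : Y →L[ℂ] Z)) (y : Y)‖ / (‖(z' : StrongDual ℂ Z)‖ * ‖(y : Y)‖) := by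
        congr 1
      rw [this, aux_sup_ratio _ hnz, hEnorm]
    rw [hLHS, hRHS, hEsymm]
end

section
/- Let Y be a Hilbert space, Z a Banach space, and B : Y → Z a bounded linear surjection with ‖B* z'‖_{Y'} ≥ β ‖z'‖_{Z'} for all z' ∈ Z' (β > 0). Then there exists a bounded *linear* right inverse R_B : Z → Y with B ∘ R_B = id_Z and ‖R_B‖ ≤ β^{-1}. -/
open NormedSpace

private lemma aux_ineq {β a b c : ℝ} (hβ : 0 < β) (ha : 0 ≤ a) (hb : 0 ≤ b)
    (h1 : β * c ≤ a) (h2 : a ^ 2 ≤ c * b) : β * a ≤ b := by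
  rcases eq_or_lt_of_le ha with h | h
  · rw [← h]; simpa using hb
  · nlinarith

private lemma aux_inv {β a b : ℝ} (hβ : 0 < β) (h : β * a ≤ b) : a ≤ β⁻¹ * b := by
  rw [← mul_le_mul_iff_right₀ hβ, ← mul_assoc, mul_inv_cancel₀ hβ.ne', one_mul]
  exact h

/-- Right-inverse lemma in Hilbert spaces: a bounded linear surjection from a
Hilbert space whose adjoint is bounded below by `β` admits a bounded *linear*
right inverse of norm at most `β⁻¹`. -/
theorem linear_right_inverse_hilbert
    {Y Z : Type*} [NormedAddCommGroup Y] [InnerProductSpace ℂ Y] [CompleteSpace Y]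
    [NormedAddCommGroup Z] [NormedSpace ℂ Z] [CompleteSpace Z]
    (B : Y →L[ℂ] Z) (hsurj : Function.Surjective B)
    (β : ℝ) (hβ : 0 < β) (hlow : ∀ z' : StrongDual ℂ Z, β * ‖z'‖ ≤ ‖z'.comp B‖) :
    ∃ R : Z →L[ℂ] Y, (∀ z : Z, B (R z) = z) ∧ ‖R‖ ≤ β⁻¹ := by
  set K : Submodule ℂ Y := LinearMap.ker (B : Y →ₗ[ℂ] Z) with hK
  have hKc : IsClosed (K : Set Y) := ContinuousLinearMap.isClosed_ker B
  haveI : CompleteSpace K := hKc.completeSpace_coe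
  set e : Kᗮ →L[ℂ] Z := B.comp Kᗮ.subtypeL with he
  have hinj : LinearMap.ker (e : Kᗮ →ₗ[ℂ] Z) = ⊥ := by
    rw [Submodule.eq_bot_iff]
    rintro ⟨x, hx⟩ hex
    have hxK : x ∈ K := by
      simpa [he, hK, LinearMap.mem_ker] using hex
    have : x = 0 := by
      have := (Submodule.mem_orthogonal K x).mp hx x hxK
      simpa [inner_self_eq_zero] using this
    simpa [this]
  have hrange : LinearMap.range (e : Kᗮ →ₗ[ℂ] Z) = ⊤ := by
    rw [Submodule.eq_top_iff']
    intro z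
    obtain ⟨y, hy⟩ := hsurj z
    obtain ⟨k, hkK, p, hpK, hyp⟩ := Submodule.exists_add_mem_mem_orthogonal (K := K) y
    refine ⟨⟨p, hpK⟩, ?_⟩
    have hBk : B k = 0 := hkK
    simp only [he, ContinuousLinearMap.comp_apply, Submodule.subtypeL_apply]
    rw [← hy, hyp]
    simp [hBk]
  set e' := ContinuousLinearEquiv.ofBijective e hinj hrange with he'
  set R : Z →L[ℂ] Y := Kᗮ.subtypeL.comp (e'.symm : Z →L[ℂ] Kᗮ) with hR
  have hright : ∀ z : Z, B (R z) = z := by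
    intro z
    have : e (e'.symm z) = z := e'.apply_symm_apply z
    simpa [hR, he] using this
  have hRmem : ∀ z : Z, R z ∈ Kᗮ := fun z => (e'.symm z).2
  -- key: β‖p‖ ≤ ‖B p‖ for p ∈ Kᗮ
  have hkey : ∀ p : Y, p ∈ Kᗮ → β * ‖p‖ ≤ ‖B p‖ := by
    intro p hp
    set z' : StrongDual ℂ Z := (innerSL ℂ p).comp R with hz'
    have hcomp : z'.comp B = innerSL ℂ p := by
      ext x
      have hdiff : x - R (B x) ∈ K := by
        simp [hK, LinearMap.mem_ker, map_sub, hright (B x)]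
      have h0 : inner ℂ (x - R (B x)) p = (0 : ℂ) :=
        (Submodule.mem_orthogonal K p).mp hp _ hdiff
      have h0' : inner ℂ p (x - R (B x)) = (0 : ℂ) := by
        rw [← inner_conj_symm, h0]; simp
      have : (inner ℂ p (R (B x)) : ℂ) = inner ℂ p x := by
        have := h0'
        rw [inner_sub_right, sub_eq_zero] at this
        exact this.symm
      simpa [hz'] using this
    have hnormcomp : ‖z'.comp B‖ = ‖p‖ := by rw [hcomp, innerSL_apply_norm]
    have hz'le : β * ‖z'‖ ≤ ‖p‖ := hnormcomp ▸ hlow z'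
    have hRBp : R (B p) = p := by
      have : e'.symm (e ⟨p, hp⟩) = ⟨p, hp⟩ := e'.symm_apply_apply ⟨p, hp⟩
      have h2 : R (e ⟨p, hp⟩) = (⟨p, hp⟩ : Kᗮ) := by
        simp [hR, this]
      simpa [he] using h2
    have hsq : ‖p‖ ^ 2 ≤ ‖z'‖ * ‖B p‖ := by
      have h1 : z' (B p) = inner ℂ p p := by simp [hz', hRBp]
      have h2 : ‖z' (B p)‖ ≤ ‖z'‖ * ‖B p‖ := z'.le_opNorm _
      calc ‖p‖ ^ 2 = ‖(inner ℂ p p : ℂ)‖ := by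
            rw [inner_self_eq_norm_sq_to_K]; simp [norm_pow]
        _ = ‖z' (B p)‖ := by rw [h1]
        _ ≤ ‖z'‖ * ‖B p‖ := h2
    exact aux_ineq hβ (norm_nonneg p) (norm_nonneg (B p)) hz'le hsq
  refine ⟨R, hright, ?_⟩
  apply ContinuousLinearMap.opNorm_le_bound _ (inv_pos.mpr hβ).le
  intro z
  have h := hkey (R z) (hRmem z)
  rw [hright z] at h
  exact aux_inv hβ h
end

section
/- Let V, W be complex Banach spaces, a a bounded sesquilinear form on V × W, V_h ⊂ V and W_h ⊂ W finite-dimensional subspaces, and suppose there is a (possibly nonlinear) map R : V_h' → W_h with A_h*(R(θ_h)) = θ_h and α̂ ‖R(θ_h)‖_W ≤ ‖θ_h‖_{V_h'} for all θ_h ∈ V_h', where A_h* : W_h → V_h' is the adjoint of the discrete operator induced by a. Define Θ : W → V_h' by ⟨Θ(w), v_h⟩ := conj(a(v_h, w)), and set Π_h := R ∘ Θ. Then Π_h satisfies: (i) a(v_h, Π_h(w) − w) = 0 for all v_h ∈ V_h, w ∈ W; (ii) (α̂/‖a‖) ‖Π_h(w)‖_W ≤ ‖w‖_W; (iii) Π_h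 is idempotent. -/
open scoped ComplexConjugate

/-- Given a stable (possibly nonlinear) right inverse `R` of the discrete
adjoint operator `A_h* : W_h → V_h'` (duals consisting of antilinear forms),
the map `Π_h := R ∘ Θ`, with `⟨Θ(w), v_h⟩ := conj (a(v_h, w))`, is a Fortin
operator: it satisfies `a(v_h, Π_h w - w) = 0`, the stability bound
`(α̂/‖a‖) ‖Π_h w‖ ≤ ‖w‖`, and it is idempotent. -/
theorem fortin_operator_from_right_inverse
    {V W : Type*} [NormedAddCommGroup V] [NormedSpace ℂ V] [CompleteSpace V]
    [NormedAddCommGroup W] [NormedSpace ℂ W] [CompleteSpace W]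
    (a : V → W → ℂ)
    (ha_addv : ∀ v v' w, a (v + v') w = a v w + a v' w)
    (ha_smulv : ∀ (c : ℂ) v w, a (c • v) w = c * a v w)
    (ha_addw : ∀ v w w', a v (w + w') = a v w + a v w')
    (ha_smulw : ∀ v (c : ℂ) w, a v (c • w) = conj c * a v w)
    (na : ℝ) (hna0 : 0 < na) (hna : ∀ v w, ‖a v w‖ ≤ na * ‖v‖ * ‖w‖)
    (Vh : Submodule ℂ V) (Wh : Submodule ℂ W)
    [FiniteDimensional ℂ Vh] [FiniteDimensional ℂ Wh]
    (αh : ℝ) (hαh0 : 0 < αh)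
    -- `R` is a stable right inverse of `A_h* : W_h → V_h'`
    (R : (Vh →L⋆[ℂ] ℂ) → W)
    (hRmem : ∀ θ, R θ ∈ Wh)
    (hR : ∀ (θ : Vh →L⋆[ℂ] ℂ) (v : Vh), conj (a (v : V) (R θ)) = θ v)
    (hRst : ∀ θ : Vh →L⋆[ℂ] ℂ, αh * ‖R θ‖ ≤ ‖θ‖)
    -- `Θ : W → V_h'` is defined by `⟨Θ(w), v_h⟩ := conj (a(v_h, w))`
    (Θ : W → (Vh →L⋆[ℂ] ℂ))
    (hΘ : ∀ (w : W) (v : Vh), Θ w v = conj (a (v : V) w)) :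
    (∀ w : W, ∀ v ∈ Vh, a v (R (Θ w) - w) = 0) ∧
      (∀ w : W, (αh / na) * ‖R (Θ w)‖ ≤ ‖w‖) ∧
      ∀ w : W, R (Θ (R (Θ w))) = R (Θ w) := by
  have key : ∀ w : W, ∀ v : Vh, a (v : V) (R (Θ w)) = a (v : V) w := by
    intro w v
    have h1 : conj (a (v : V) (R (Θ w))) = conj (a (v : V) w) := by
      rw [hR, hΘ]
    simpa using congrArg conj h1
  refine ⟨?_, ?_, ?_⟩
  · intro w v hv
    have hsub : a v (R (Θ w) - w) = a v (R (Θ w)) - a v w := by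
      have hneg : a v (-w) = - a v w := by
        simpa using ha_smulw v (-1) w
      rw [sub_eq_add_neg, ha_addw, hneg, sub_eq_add_neg]
    rw [hsub, key w ⟨v, hv⟩, sub_self]
  · intro w
    have hΘnorm : ‖Θ w‖ ≤ na * ‖w‖ := by
      apply ContinuousLinearMap.opNorm_le_bound
      · positivity
      · intro v
        rw [hΘ]
        calc ‖conj (a (v : V) w)‖ = ‖a (v : V) w‖ := by simp
          _ ≤ na * ‖(v : V)‖ * ‖w‖ := hna _ _
          _ = na * ‖w‖ * ‖v‖ := by rw [Submodule.norm_coe]; ring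
    have h1 : αh * ‖R (Θ w)‖ ≤ na * ‖w‖ := (hRst (Θ w)).trans hΘnorm
    rw [div_mul_eq_mul_div, div_le_iff₀ hna0]
    linarith [h1]
  · intro w
    congr 1
    ext v
    rw [hΘ, key w v, ← hΘ]
end

section
/- Let V, W be complex Banach spaces, a a bounded sesquilinear form with discrete inf-sup constant α̂ > 0 on finite-dimensional V_h ⊂ V, W_h ⊂ W. Suppose there is a decomposition W_h = Ker(A_h*) ⊕ K_h with induced projector π_{K_h} : W_h → K_h satisfying κ ‖π_{K_h} w_h‖_W ≤ ‖w_h‖_W for all w_h ∈ W_h (κ > 0). Then there exists a *linear* Fortin operator Π_h : W → W_h with a(v_h, Π_h w − w) = 0 for all v_h ∈ V_h, w ∈ W, and (κα̂/‖a‖) ‖Π_h w‖_W ≤ ‖w‖_W. -/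
open scoped ComplexConjugate

lemma aux_dual_top {K E : Type*} [Field K] [AddCommGroup E] [Module K E] [FiniteDimensional K E]
    (U : Submodule K (Module.Dual K E)) (h : ∀ v : E, (∀ f ∈ U, f v = 0) → v = 0) : U = ⊤ := by
  have hb : U.dualCoannihilator = ⊥ := by
    rw [Submodule.eq_bot_iff]
    exact fun v hv => h v ((Submodule.mem_dualCoannihilator v).1 hv)
  have h2 := Subspace.finrank_add_finrank_dualCoannihilator_eq U
  rw [hb, finrank_bot] at h2
  apply Submodule.eq_top_of_finrank_eq
  rw [Subspace.dual_finrank_eq]; omega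

/-- Converse Fortin Lemma with a linear operator in Banach spaces: if the
decomposition `W_h = Ker(A_h*) ⊕ K_h` is `κ`-stable, then there is a *linear*
Fortin operator with stability constant `κ α̂ / ‖a‖`. -/
theorem converse_fortin_linear_of_stable_decomposition
    {V W : Type*} [NormedAddCommGroup V] [NormedSpace ℂ V] [CompleteSpace V]
    [NormedAddCommGroup W] [NormedSpace ℂ W] [CompleteSpace W]
    (a : V → W → ℂ)
    (ha_addv : ∀ v v' w, a (v + v') w = a v w + a v' w)
    (ha_smulv : ∀ (c : ℂ) v w, a (c • v) w = c * a v w)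
    (ha_addw : ∀ v w w', a v (w + w') = a v w + a v w')
    (ha_smulw : ∀ v (c : ℂ) w, a v (c • w) = conj c * a v w)
    (na : ℝ) (hna0 : 0 < na) (hna : ∀ v w, ‖a v w‖ ≤ na * ‖v‖ * ‖w‖)
    (Vh : Submodule ℂ V) (Wh : Submodule ℂ W)
    [FiniteDimensional ℂ Vh] [FiniteDimensional ℂ Wh]
    -- discrete inf-sup condition with constant `α̂ > 0`
    (αh : ℝ) (hαh0 : 0 < αh)
    (hαh : ∀ v ∈ Vh, αh * ‖v‖ ≤ ⨆ wh : Wh, ‖a v (wh : W)‖ / ‖(wh : W)‖)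
    -- `κ`-stable decomposition `W_h = Ker(A_h*) ⊕ K_h` with induced projector `π`
    (Kh : Submodule ℂ W) (hKhle : Kh ≤ Wh)
    (hdirect : ∀ w ∈ Kh, (∀ v ∈ Vh, a v w = 0) → w = 0)
    (π : W → W)
    (hπmem : ∀ w ∈ Wh, π w ∈ Kh)
    (hπker : ∀ w ∈ Wh, ∀ v ∈ Vh, a v (w - π w) = 0)
    (hπid : ∀ w ∈ Kh, π w = w)
    (hπadd : ∀ w ∈ Wh, ∀ w' ∈ Wh, π (w + w') = π w + π w')
    (hπsmul : ∀ (c : ℂ), ∀ w ∈ Wh, π (c • w) = c • π w)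
    (κ : ℝ) (hκ0 : 0 < κ)
    (hπst : ∀ w ∈ Wh, κ * ‖π w‖ ≤ ‖w‖) :
    ∃ P : W →ₗ[ℂ] W, (∀ w, P w ∈ Wh) ∧
      (∀ w : W, ∀ v ∈ Vh, a v (P w - w) = 0) ∧
      ∀ w : W, (κ * αh / na) * ‖P w‖ ≤ ‖w‖ := by
  haveI : FiniteDimensional ℂ Kh := Submodule.finiteDimensional_of_le hKhle
  haveI : Nonempty Wh := ⟨0⟩
  -- subtraction in second slot
  have ha_subw : ∀ v w w', a v (w - w') = a v w - a v w' := by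
    intro v w w'
    have h := ha_addw v (w - w') w'
    rw [sub_add_cancel] at h
    rw [eq_sub_of_add_eq h.symm]
  -- a v wh = a v (π wh) for v ∈ Vh, wh ∈ Wh
  have haπ : ∀ v ∈ Vh, ∀ wh ∈ Wh, a v wh = a v (π wh) := by
    intro v hv wh hwh
    have h := hπker wh hwh v hv
    rw [ha_subw] at h
    linear_combination h
  -- if a v vanishes on Kh then v = 0
  have hvzero : ∀ v : Vh, (∀ k : Kh, a (v : V) (k : W) = 0) → v = 0 := by
    intro v hv
    have hsup : (⨆ wh : Wh, ‖a (v : V) (wh : W)‖ / ‖(wh : W)‖) ≤ 0 := by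
      apply ciSup_le
      intro wh
      have : a (v : V) (wh : W) = 0 := by
        rw [haπ v v.2 wh wh.2]
        exact hv ⟨π wh, hπmem wh wh.2⟩
      simp [this]
    have h := le_trans (hαh v v.2) hsup
    have hn0 : ‖(v : V)‖ = 0 := by nlinarith [norm_nonneg (v : V)]
    exact Subtype.ext (norm_eq_zero.1 hn0)
  -- the semilinear map S : Kh → Dual Vh
  set S : Kh →ₛₗ[starRingEnd ℂ] Module.Dual ℂ Vh :=
    { toFun := fun k =>
        { toFun := fun v => a (v : V) (k : W)
          map_add' := fun v v' => ha_addv v v' k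
          map_smul' := fun c v => ha_smulv c v k }
      map_add' := fun k k' => LinearMap.ext fun v => by
        simpa using ha_addw (v : V) (k : W) (k' : W)
      map_smul' := fun c k => LinearMap.ext fun v => by
        simpa using ha_smulw (v : V) c (k : W) } with hSdef
  have hS_apply : ∀ (k : Kh) (v : Vh), S k v = a (v : V) (k : W) := fun _ _ => rfl
  -- S is injective
  have hS_inj : Function.Injective S := by
    rw [injective_iff_map_eq_zero S]
    intro k hk
    have : (k : W) = 0 := by
      apply hdirect (k : W) k.2
      intro v hv
      have := congrArg (fun f : Module.Dual ℂ Vh => f ⟨v, hv⟩) hk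
      simpa [hS_apply] using this
    exact Subtype.ext this
  -- S is surjective
  have hS_surj : Function.Surjective S := by
    rw [← LinearMap.range_eq_top]
    apply aux_dual_top
    intro v hv
    apply hvzero
    intro k
    exact hv (S k) (LinearMap.mem_range_self S k)
  -- the semilinear map R : Vh → Dual Kh
  set R : Vh →ₛₗ[starRingEnd ℂ] Module.Dual ℂ Kh :=
    { toFun := fun v =>
        { toFun := fun k => conj (a (v : V) (k : W))
          map_add' := fun k k' => by
            simp only [Submodule.coe_add, ha_addw, map_add]
          map_smul' := fun c k => by
            simp only [Submodule.coe_smul, ha_smulw, map_mul, RingHom.id_apply,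
              Complex.conj_conj, smul_eq_mul] }
      map_add' := fun v v' => LinearMap.ext fun k => by
        simp only [Submodule.coe_add, ha_addv, map_add]; rfl
      map_smul' := fun c v => LinearMap.ext fun k => by
        simp only [Submodule.coe_smul, ha_smulv, map_mul]; rfl } with hRdef
  have hR_apply : ∀ (v : Vh) (k : Kh), R v k = conj (a (v : V) (k : W)) := fun _ _ => rfl
  -- R is surjective
  have hR_surj : Function.Surjective R := by
    rw [← LinearMap.range_eq_top]
    apply aux_dual_top
    intro k hk
    have : (k : W) = 0 := by
      apply hdirect (k : W) k.2
      intro v hv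
      have := hk (R ⟨v, hv⟩) (LinearMap.mem_range_self R ⟨v, hv⟩)
      rw [hR_apply] at this
      simpa using congrArg conj this
    exact Subtype.ext this
  -- the equivalence and the Fortin operator
  let e : Kh ≃ₛₗ[starRingEnd ℂ] Module.Dual ℂ Vh := LinearEquiv.ofBijective S ⟨hS_inj, hS_surj⟩
  set L : W →ₛₗ[starRingEnd ℂ] Module.Dual ℂ Vh :=
    { toFun := fun w =>
        { toFun := fun v => a (v : V) w
          map_add' := fun v v' => ha_addv v v' w
          map_smul' := fun c v => ha_smulv c v w }
      map_add' := fun w w' => LinearMap.ext fun v => ha_addw (v : V) w w'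
      map_smul' := fun c w => LinearMap.ext fun v => ha_smulw (v : V) c w } with hLdef
  let P0 : W →ₗ[ℂ] Kh := (e.symm.toLinearMap).comp L
  -- key identity : a v (P0 w) = a v w for v ∈ Vh
  have hkey : ∀ (w : W) (v : Vh), a (v : V) ((P0 w : Kh) : W) = a (v : V) w := by
    intro w v
    have hS : S (P0 w) = L w := e.apply_symm_apply (L w)
    have := congrArg (fun f : Module.Dual ℂ Vh => f v) hS
    simpa [hS_apply, show L w v = a (v : V) w from rfl] using this
  refine ⟨Kh.subtype.comp P0, fun w => hKhle (P0 w).2, ?_, ?_⟩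
  · intro w v hv
    rw [ha_subw]
    have := hkey w ⟨v, hv⟩
    simpa [sub_eq_zero] using this
  · intro w
    simp only [LinearMap.coe_comp, Function.comp_apply, Submodule.coe_subtype]
    set k : Kh := P0 w with hk
    rcases eq_or_ne k 0 with hk0 | hk0
    · rw [hk0]
      simp only [ZeroMemClass.coe_zero, norm_zero, mul_zero]
      exact norm_nonneg w
    -- Hahn-Banach on Kh
    obtain ⟨g, hg1, hgk⟩ := exists_dual_vector ℂ k (norm_ne_zero_iff.mpr hk0)
    obtain ⟨v, hv⟩ := hR_surj g.toLinearMap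
    -- bound on ‖v‖ : αh ‖v‖ ≤ 1/κ
    have hbdd : ∀ k' : Kh, ‖a (v : V) ((k' : Kh) : W)‖ ≤ ‖(k' : W)‖ := by
      intro k'
      have h1 : R v k' = g k' := by rw [hv]; rfl
      have h2 : ‖g k'‖ ≤ ‖k'‖ := by
        calc ‖g k'‖ ≤ ‖g‖ * ‖k'‖ := g.le_opNorm k'
        _ = ‖k'‖ := by rw [hg1, one_mul]
      calc ‖a (v : V) ((k' : Kh) : W)‖ = ‖R v k'‖ := by rw [hR_apply]; simp
      _ = ‖g k'‖ := by rw [h1]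
      _ ≤ ‖(k' : W)‖ := h2
    have hvbound : αh * ‖(v : V)‖ ≤ 1 / κ := by
      refine le_trans (hαh (v : V) v.2) (ciSup_le fun wh => ?_)
      rcases eq_or_ne ‖(wh : W)‖ 0 with h0 | h0
      · rw [h0, div_zero]; positivity
      · rw [div_le_div_iff₀ (lt_of_le_of_ne (norm_nonneg _) (Ne.symm h0)) hκ0]
        have h1 : a (v : V) (wh : W) = a (v : V) (π wh) := haπ v v.2 wh wh.2
        have h2 := hbdd ⟨π wh, hπmem wh wh.2⟩
        have h3 := hπst wh wh.2
        rw [h1]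
        calc ‖a (v : V) (π (wh : W))‖ * κ ≤ ‖π (wh : W)‖ * κ := by
              exact mul_le_mul_of_nonneg_right h2 hκ0.le
        _ = κ * ‖π (wh : W)‖ := mul_comm _ _
        _ ≤ ‖(wh : W)‖ := h3
        _ = 1 * ‖(wh : W)‖ := (one_mul _).symm
    -- the norm of k
    have hknorm : ‖(k : W)‖ = ‖a (v : V) w‖ := by
      have h1 : R v k = g k := by rw [hv]; rfl
      rw [hR_apply] at h1
      have h2 : ‖a (v : V) (k : W)‖ = ‖g k‖ := by rw [← h1, RCLike.norm_conj]
      have h3 : ‖g k‖ = ‖(k : W)‖ := by rw [hgk]; simp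
      rw [← hkey w v, h2, h3]
    have hfin : ‖(k : W)‖ ≤ na * ‖(v : V)‖ * ‖w‖ := hknorm ▸ hna (v : V) w
    rw [div_mul_eq_mul_div, div_le_iff₀ hna0]
    have hv1 : κ * (αh * ‖(v : V)‖) ≤ 1 := by
      calc κ * (αh * ‖(v : V)‖) ≤ κ * (1 / κ) := by
            exact mul_le_mul_of_nonneg_left hvbound hκ0.le
      _ = 1 := mul_one_div_cancel hκ0.ne'
    calc κ * αh * ‖(k : W)‖ ≤ κ * αh * (na * ‖(v : V)‖ * ‖w‖) := by
          apply mul_le_mul_of_nonneg_left hfin; positivity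
    _ = (κ * (αh * ‖(v : V)‖)) * (na * ‖w‖) := by ring
    _ ≤ 1 * (na * ‖w‖) := mul_le_mul_of_nonneg_right hv1 (by positivity)
    _ = ‖w‖ * na := by ring
end
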